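/- arXiv:2111.04532 — 5 statements merged into one kernel-verified Lean document; each statement's English description precedes it below -/
import Mathlib

section
/- Let B = B(0,1) ⊂ ℝⁿ be the open unit ball and γ ≥ 1. Then the radially symmetric function v(x) = -(1-|x|²)^((n+1)/(n+γ)) is convex on B. -/
/-- For `γ ≥ 1`, the radially symmetric function
`v(x) = -(1-‖x‖²)^((n+1)/(n+γ))` is convex on the open unit ball of `ℝⁿ`. -/
theorem stmt_0 (n : ℕ) (hn : 1 ≤ n) (γ : ℝ) (hγ : 1 ≤ γ) :
    ConvexOn ℝ (Metric.ball (0 : EuclideanSpace ℝ (Fin n)) 1)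
      (fun x => -((1 - ‖x‖ ^ 2) ^ (((n : ℝ) + 1) / ((n : ℝ) + γ)))) := by
  set η : ℝ := ((n : ℝ) + 1) / ((n : ℝ) + γ) with hη
  set B := Metric.ball (0 : EuclideanSpace ℝ (Fin n)) 1 with hB
  have hn' : (0:ℝ) < (n:ℝ) + γ := by positivity
  have hη0 : 0 ≤ η := by positivity
  have hη1 : η ≤ 1 := by
    rw [hη, div_le_one hn']; linarith
  -- f x = 1 - ‖x‖² is concave on B
  have hsq : ConvexOn ℝ B (fun x : EuclideanSpace ℝ (Fin n) => ‖x‖ ^ 2) := by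
    refine ⟨convex_ball _ _, ?_⟩
    intro x hx y hy a b ha hb hab
    have h1 : ‖a • x + b • y‖ ≤ a * ‖x‖ + b * ‖y‖ := by
      calc ‖a • x + b • y‖ ≤ ‖a • x‖ + ‖b • y‖ := norm_add_le _ _
        _ = a * ‖x‖ + b * ‖y‖ := by
            rw [norm_smul, norm_smul, Real.norm_eq_abs, Real.norm_eq_abs,
              abs_of_nonneg ha, abs_of_nonneg hb]
    have h2 : ‖a • x + b • y‖ ^ 2 ≤ (a * ‖x‖ + b * ‖y‖) ^ 2 :=
      pow_le_pow_left₀ (norm_nonneg _) h1 2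
    have h3 : (a * ‖x‖ + b * ‖y‖) ^ 2 ≤ a * ‖x‖ ^ 2 + b * ‖y‖ ^ 2 := by
      nlinarith [sq_nonneg (‖x‖ - ‖y‖), mul_nonneg ha hb]
    simpa [smul_eq_mul] using h2.trans h3
  have hf : ConcaveOn ℝ B (fun x : EuclideanSpace ℝ (Fin n) => 1 - ‖x‖ ^ 2) := by
    have := hsq.neg.add_const 1
    have e : (fun x : EuclideanSpace ℝ (Fin n) => 1 - ‖x‖ ^ 2) = (-fun x => ‖x‖ ^ 2) + fun x => 1 := by
      funext x; simp only [Pi.add_apply, Pi.neg_apply]; ring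
    rw [e]; exact this
  have hfpos : ∀ x ∈ B, (0:ℝ) ≤ 1 - ‖x‖ ^ 2 := by
    intro x hx
    have hx1 : ‖x‖ < 1 := by simpa [hB] using hx
    nlinarith [norm_nonneg x]
  have hgcc := Real.concaveOn_rpow hη0 hη1
  have key : ConcaveOn ℝ B (fun x : EuclideanSpace ℝ (Fin n) => (1 - ‖x‖ ^ 2) ^ η) := by
    refine ⟨convex_ball _ _, ?_⟩
    intro x hx y hy a b ha hb hab
    have hz : a • x + b • y ∈ B := (convex_ball _ _) hx hy ha hb hab
    have h1 : a * (1 - ‖x‖ ^ 2) + b * (1 - ‖y‖ ^ 2) ≤ 1 - ‖a • x + b • y‖ ^ 2 := by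
      simpa [smul_eq_mul] using hf.2 hx hy ha hb hab
    have h2 : (a * (1 - ‖x‖ ^ 2) + b * (1 - ‖y‖ ^ 2)) ^ η
        ≤ (1 - ‖a • x + b • y‖ ^ 2) ^ η := by
      refine Real.rpow_le_rpow ?_ h1 hη0
      have := hfpos x hx; have := hfpos y hy
      positivity
    have h3 : a * (1 - ‖x‖ ^ 2) ^ η + b * (1 - ‖y‖ ^ 2) ^ η
        ≤ (a * (1 - ‖x‖ ^ 2) + b * (1 - ‖y‖ ^ 2)) ^ η := by
      simpa [smul_eq_mul] using hgcc.2 (hfpos x hx) (hfpos y hy) ha hb hab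
    calc a • (1 - ‖x‖ ^ 2) ^ η + b • (1 - ‖y‖ ^ 2) ^ η
        ≤ (a * (1 - ‖x‖ ^ 2) + b * (1 - ‖y‖ ^ 2)) ^ η := by simpa [smul_eq_mul] using h3
      _ ≤ (1 - ‖a • x + b • y‖ ^ 2) ^ η := h2
  exact key.neg
end

section
/- Let B = B(0,1) ⊂ ℝⁿ, γ ≥ 1, and v(x) = -(1-|x|²)^η with η = (n+1)/(n+γ). Then for all x in B with x ≠ 0, det D²v(x) = (2η)ⁿ [1 + (1-2η)|x|²] · (-v(x))^(-γ). -/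
open scoped RealInnerProductSpace
variable {E : Type*} [NormedAddCommGroup E] [InnerProductSpace ℝ E]

noncomputable def iSL (E : Type*) [NormedAddCommGroup E] [InnerProductSpace ℝ E] :
    E →L[ℝ] E →L[ℝ] ℝ := innerSL ℝ

lemma iSL_apply (x y : E) : iSL E x y = ⟪x, y⟫ := rfl

lemma aux_hasDerivAt (c p : ℝ) (s : ℝ) (hs : 1 - s ≠ 0) :
    HasDerivAt (fun u : ℝ => c * (1-u) ^ p) (-(c * p * (1-s) ^ (p-1))) s := by
  have h1 : HasDerivAt (fun u : ℝ => 1 - u) (-1) s := by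
    simpa using (hasDerivAt_id s).const_sub 1
  have h2 := (Real.hasDerivAt_rpow_const (x := 1 - s) (p := p) (Or.inl hs)).comp s h1
  have h3 := h2.const_mul c
  refine h3.congr_deriv ?_
  ring

lemma aux_hasFDerivAt_v (η : ℝ) (v : E → ℝ) (hv : ∀ x, v x = -((1 - ‖x‖ ^ 2) ^ η))
    (y : E) (hy : ‖y‖ < 1) :
    HasFDerivAt v ((2*η*(1-‖y‖^2) ^ (η-1)) • iSL E y) y := by
  have hne : 1 - ‖y‖^2 ≠ 0 := by nlinarith [norm_nonneg y, sq_nonneg (‖y‖ - 1)]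
  have hns : HasFDerivAt (fun z : E => ‖z‖ ^ 2) (2 • innerSL ℝ y) y :=
    (hasStrictFDerivAt_norm_sq y).hasFDerivAt
  have h := (aux_hasDerivAt (-1) η (‖y‖^2) hne).comp_hasFDerivAt y hns
  have hfun : v = (fun u : ℝ => (-1) * (1-u) ^ η) ∘ (fun z : E => ‖z‖ ^ 2) := by
    funext z; simp [hv z, Function.comp]
  rw [hfun]
  refine h.congr_fderiv ?_
  ext u
  simp [ContinuousLinearMap.smul_apply, iSL_apply]
  ring

lemma aux_hasFDerivAt_phi (η : ℝ) (x : E) (hne : 1 - ‖x‖^2 ≠ 0) :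
    HasFDerivAt (fun y : E => 2*η*(1-‖y‖^2) ^ (η-1))
      ((-4*η*(η-1)*(1-‖x‖^2) ^ (η-2)) • iSL E x) x := by
  have hns : HasFDerivAt (fun z : E => ‖z‖ ^ 2) (2 • innerSL ℝ x) x :=
    (hasStrictFDerivAt_norm_sq x).hasFDerivAt
  have h := (aux_hasDerivAt (2*η) (η-1) (‖x‖^2) hne).comp_hasFDerivAt x hns
  refine h.congr_fderiv ?_
  ext u
  simp [ContinuousLinearMap.smul_apply, iSL_apply]
  ring_nf

lemma aux_hasFDerivAt_g (η : ℝ) (x : E) (hne : 1 - ‖x‖^2 ≠ 0) :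
    HasFDerivAt (fun y : E => (2*η*(1-‖y‖^2) ^ (η-1)) • iSL E y)
      ((2*η*(1-‖x‖^2) ^ (η-1)) • iSL E
        + ((-4*η*(η-1)*(1-‖x‖^2) ^ (η-2)) • iSL E x).smulRight (iSL E x)) x :=
  (aux_hasFDerivAt_phi η x hne).smul ((iSL E).hasFDerivAt)

lemma aux_second (η : ℝ) (v : E → ℝ) (hv : ∀ x, v x = -((1 - ‖x‖ ^ 2) ^ η))
    (x : E) (hx : ‖x‖ < 1) (u w : E) :
    fderiv ℝ (fderiv ℝ v) x u w
      = 2*η*(1-‖x‖^2) ^ (η-1) * ⟪u, w⟫ + (-4*η*(η-1)*(1-‖x‖^2) ^ (η-2)) * ⟪x, u⟫ * ⟪x, w⟫ := by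
  have hne : 1 - ‖x‖^2 ≠ 0 := by nlinarith [norm_nonneg x, sq_nonneg (‖x‖ - 1)]
  have hev : fderiv ℝ v =ᶠ[nhds x] fun y : E => (2*η*(1-‖y‖^2) ^ (η-1)) • iSL E y := by
    have hball : ∀ᶠ y in nhds x, ‖y‖ < 1 := by
      have := Metric.isOpen_ball.eventually_mem (show x ∈ Metric.ball (0:E) 1 by
        simpa [mem_ball_zero_iff] using hx)
      exact this.mono fun y hy => by simpa [mem_ball_zero_iff] using hy
    exact hball.mono fun y hy => (aux_hasFDerivAt_v η v hv y hy).fderiv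
  rw [hev.fderiv_eq, (aux_hasFDerivAt_g η x hne).fderiv]
  rw [ContinuousLinearMap.add_apply, ContinuousLinearMap.smul_apply,
    ContinuousLinearMap.smulRight_apply, ContinuousLinearMap.add_apply,
    ContinuousLinearMap.smul_apply, ContinuousLinearMap.smul_apply,
    ContinuousLinearMap.smul_apply, iSL_apply, iSL_apply, iSL_apply]
  simp only [smul_eq_mul]
  try ring


/-- The determinant of the Hessian matrix of `v` at `x`, where the Hessian entries
are given by the second iterated Fréchet derivative evaluated on basis vectors. -/
noncomputable def hessDet {n : ℕ} (v : EuclideanSpace ℝ (Fin n) → ℝ)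
    (x : EuclideanSpace ℝ (Fin n)) : ℝ :=
  Matrix.det (Matrix.of fun i j =>
    iteratedFDeriv ℝ 2 v x ![EuclideanSpace.single i 1, EuclideanSpace.single j 1])

/-- For `γ ≥ 1`, `η = (n+1)/(n+γ)` and `v(x) = -(1-‖x‖²)^η`, one has
`det D²v(x) = (2η)ⁿ (1 + (1-2η)‖x‖²) (-v(x))^(-γ)` for `x ≠ 0` in the unit ball. -/
theorem stmt_1 (n : ℕ) (hn : 1 ≤ n) (γ : ℝ) (hγ : 1 ≤ γ)
    (η : ℝ) (hη : η = ((n : ℝ) + 1) / ((n : ℝ) + γ))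
    (v : EuclideanSpace ℝ (Fin n) → ℝ)
    (hv : ∀ x, v x = -((1 - ‖x‖ ^ 2) ^ η))
    (x : EuclideanSpace ℝ (Fin n)) (hx : x ∈ Metric.ball (0 : EuclideanSpace ℝ (Fin n)) 1)
    (hx0 : x ≠ 0) :
    hessDet v x = (2 * η) ^ n * (1 + (1 - 2 * η) * ‖x‖ ^ 2) * (-v x) ^ (-γ) := by
  have hxlt : ‖x‖ < 1 := by simpa [mem_ball_zero_iff] using hx
  set t := ‖x‖ ^ 2 with ht
  have ht0 : (0:ℝ) ≤ t := sq_nonneg _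
  have hs : (0:ℝ) < 1 - t := by nlinarith [norm_nonneg x]
  have hγn : (0:ℝ) < (n:ℝ) + γ := by
    have : (0:ℝ) ≤ (n:ℝ) := Nat.cast_nonneg n
    linarith
  have hηe : η * ((n:ℝ) + γ) = (n:ℝ) + 1 := by
    rw [hη]; field_simp
  have hηpos : (0:ℝ) < η := by
    rw [hη]
    have : (0:ℝ) ≤ (n:ℝ) := Nat.cast_nonneg n
    positivity
  set a : ℝ := 2*η*(1-t) ^ (η-1) with haa
  set m : ℝ := -4*η*(η-1)*(1-t) ^ (η-2) with hma
  have ha : 0 < a := by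
    have := Real.rpow_pos_of_pos hs (η-1)
    positivity
  have hentry : ∀ i j : Fin n,
      iteratedFDeriv ℝ 2 v x ![EuclideanSpace.single i 1, EuclideanSpace.single j 1]
        = a * (if i = j then 1 else 0) + (m * x i) * x j := by
    intro i j
    rw [iteratedFDeriv_two_apply]
    simp only [Matrix.cons_val_zero, Matrix.cons_val_one, Matrix.head_cons]
    rw [aux_second η v hv x hxlt]
    simp only [EuclideanSpace.inner_single_left, EuclideanSpace.inner_single_right,
      EuclideanSpace.single_apply, map_one, one_mul, mul_one, conj_trivial]
    rcases eq_or_ne i j with h | h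
    · subst h; simp [← haa, ← hma, ← ht]; ring
    · simp [h, Ne.symm h, ← haa, ← hma, ← ht]; ring
  have hM : (Matrix.of fun i j =>
      iteratedFDeriv ℝ 2 v x ![EuclideanSpace.single i 1, EuclideanSpace.single j 1])
      = a • (1 : Matrix (Fin n) (Fin n) ℝ)
        + Matrix.vecMulVec (fun i => m * x i) (fun j => x j) := by
    ext i j
    simp [hentry i j, Matrix.vecMulVec_apply, Matrix.one_apply, mul_ite]
  have hfac : a • (1 : Matrix (Fin n) (Fin n) ℝ)
        + Matrix.vecMulVec (fun i => m * x i) (fun j => x j)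
      = a • ((1 : Matrix (Fin n) (Fin n) ℝ)
        + Matrix.vecMulVec (fun i => a⁻¹ * m * x i) (fun j => x j)) := by
    rw [smul_add]
    congr 1
    ext i j
    simp only [Matrix.vecMulVec_apply, Matrix.smul_apply, smul_eq_mul]
    field_simp
  have hxx : ∑ i, x i * x i = t := by
    rw [ht, ← real_inner_self_eq_norm_sq]
    simp only [PiLp.inner_apply, RCLike.inner_apply, conj_trivial]
  have hdet1 : ((1 : Matrix (Fin n) (Fin n) ℝ)
      + Matrix.vecMulVec (fun i => a⁻¹ * m * x i) (fun j => x j)).det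
      = 1 + a⁻¹ * m * t := by
    rw [Matrix.vecMulVec_eq Unit, Matrix.det_one_add_replicateCol_mul_replicateRow]
    have h1 : ∀ j, x j * (a⁻¹ * m * x j) = a⁻¹ * m * (x j * x j) := fun j => by ring
    simp only [dotProduct, h1, ← Finset.mul_sum, hxx]
  have hdet : hessDet v x = a ^ n * (1 + a⁻¹ * m * t) := by
    unfold hessDet
    rw [hM, hfac, Matrix.det_smul, hdet1]
    simp [Fintype.card_fin]
  rw [hdet]
  have hmv : -v x = (1-t) ^ η := by rw [hv x, neg_neg]
  rw [hmv]
  have hrr : (1-t) ^ (η-2) * ((1-t) ^ (η-1))⁻¹ = (1-t)⁻¹ := by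
    rw [← Real.rpow_neg hs.le, ← Real.rpow_add hs]
    norm_num [Real.rpow_neg_one]
  have h1 : a⁻¹ * m = -2*(η-1) * (1-t)⁻¹ := by
    rw [haa, hma, mul_inv, mul_inv]
    have h2η : (2*η) ≠ 0 := by positivity
    field_simp
    rw [show η-1 = (η-2)+1 by ring, Real.rpow_add_one hs.ne']
    ring
  have h2 : 1 + a⁻¹ * m * t = (1+(1-2*η)*t) * (1-t)⁻¹ := by
    rw [h1]; field_simp; ring
  have h3 : a ^ n = (2*η) ^ n * (1-t) ^ ((η-1)*(n:ℝ)) := by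
    rw [haa, mul_pow, ← Real.rpow_natCast ((1-t) ^ (η-1)) n, ← Real.rpow_mul hs.le]
  have h4 : ((1-t) ^ η) ^ (-γ) = (1-t) ^ (η*(-γ)) := (Real.rpow_mul hs.le η (-γ)).symm
  have h5 : (1-t) ^ ((η-1)*(n:ℝ)) * (1-t)⁻¹ = (1-t) ^ (η*(-γ)) := by
    rw [← Real.rpow_neg_one (1-t), ← Real.rpow_add hs]
    congr 1
    linear_combination hηe
  calc a ^ n * (1 + a⁻¹ * m * t)
      = (2*η) ^ n * (1+(1-2*η)*t) * ((1-t) ^ ((η-1)*(n:ℝ)) * (1-t)⁻¹) := by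
        rw [h3, h2]; ring
    _ = (2 * η) ^ n * (1 + (1 - 2 * η) * t) * ((1-t) ^ η) ^ (-γ) := by
        rw [h5, h4]
end

section
/- With Δ, x₀, η = 2/(n+γ), and v(x) = -(x₀x₁⋯xₙ)^η as above: v is convex on Δ if and only if γ ≥ n. -/
open Finset Real Set

/-- Core inequality: two weighted AM-GM applications. -/
lemma stmt8_core (n : ℕ) (hn : 1 ≤ n) (M r : Fin (n+1) → ℝ)
    (hM : ∀ i, 0 < M i) (hMs : ∑ i, M i = 1)
    (hr : ∀ i, 0 < r i) (hrs : ∑ i, M i * r i = 1) :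
    ∏ i, r i ≤ ((∑ i, r i - 1) / n) ^ n := by
  have hn0 : (0:ℝ) < n := by exact_mod_cast hn
  have hnt : Nontrivial (Fin (n+1)) := Fin.nontrivial_iff_two_le.mpr (by omega)
  have hMlt : ∀ i, M i < 1 := by
    intro i
    obtain ⟨j, hj⟩ := exists_ne i
    calc M i < ∑ k, M k :=
          Finset.single_lt_sum hj (mem_univ i) (mem_univ j) (hM j)
            (fun k _ _ => (hM k).le)
      _ = 1 := hMs
  set w : Fin (n+1) → ℝ := fun i => (1 - M i) / n with hw
  have hwpos : ∀ i, 0 < w i := fun i => div_pos (by linarith [hMlt i]) hn0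
  have hws : ∑ i, w i = 1 := by
    have : ∑ i, w i = (∑ i, (1 - M i)) / n := by rw [Finset.sum_div]
    rw [this, Finset.sum_sub_distrib, hMs, Finset.sum_const, Finset.card_univ,
      Fintype.card_fin]
    field_simp
    rw [nsmul_eq_mul]; push_cast; ring
  have h1 : ∏ i, r i ^ w i ≤ ∑ i, w i * r i :=
    Real.geom_mean_le_arith_mean_weighted univ w r (fun i _ => (hwpos i).le) hws
      (fun i _ => (hr i).le)
  have h2 : ∏ i, r i ^ M i ≤ ∑ i, M i * r i :=
    Real.geom_mean_le_arith_mean_weighted univ M r (fun i _ => (hM i).le) hMs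
      (fun i _ => (hr i).le)
  have hA : ∑ i, w i * r i = (∑ i, r i - 1) / n := by
    rw [← hrs, ← Finset.sum_sub_distrib, Finset.sum_div]
    apply Finset.sum_congr rfl
    intro i _
    rw [hw]
    field_simp
  have hpt : ∀ i, r i = (r i ^ w i) ^ n * r i ^ M i := by
    intro i
    rw [← Real.rpow_natCast (r i ^ w i) n, ← Real.rpow_mul (hr i).le,
      ← Real.rpow_add (hr i)]
    have : w i * n + M i = 1 := by rw [hw]; field_simp; ring
    rw [this, Real.rpow_one]
  have hsplit : ∏ i, r i = (∏ i, r i ^ w i) ^ n * ∏ i, r i ^ M i := by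
    calc ∏ i, r i = ∏ i, ((r i ^ w i) ^ n * r i ^ M i) :=
          Finset.prod_congr rfl (fun i _ => hpt i)
      _ = (∏ i, (r i ^ w i) ^ n) * ∏ i, r i ^ M i := Finset.prod_mul_distrib
      _ = (∏ i, r i ^ w i) ^ n * ∏ i, r i ^ M i := by rw [Finset.prod_pow]
  have hgpos : 0 ≤ ∏ i, r i ^ w i :=
    Finset.prod_nonneg fun i _ => (Real.rpow_pos_of_pos (hr i) _).le
  have hApos : 0 ≤ (∑ i, r i - 1) / n := by
    rw [← hA]; exact le_trans hgpos h1
  calc ∏ i, r i = (∏ i, r i ^ w i) ^ n * ∏ i, r i ^ M i := hsplit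
    _ ≤ ((∑ i, r i - 1) / n) ^ n * 1 := by
        apply mul_le_mul
        · exact pow_le_pow_left₀ hgpos (by rw [← hA]; exact h1) n
        · rw [← hrs]; exact h2
        · exact Finset.prod_nonneg fun i _ => (Real.rpow_pos_of_pos (hr i) _).le
        · exact pow_nonneg hApos n
    _ = ((∑ i, r i - 1) / n) ^ n := mul_one _

/-- Gradient (tangent-plane) inequality for the 1/n geometric mean on the simplex. -/
lemma stmt8_grad (n : ℕ) (hn : 1 ≤ n) (Y M : Fin (n+1) → ℝ)
    (hY : ∀ i, 0 < Y i) (hYs : ∑ i, Y i = 1)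
    (hM : ∀ i, 0 < M i) (hMs : ∑ i, M i = 1) :
    (∏ i, Y i) ^ ((n:ℝ)⁻¹) ≤ (∏ i, M i) ^ ((n:ℝ)⁻¹) * ((∑ i, Y i / M i - 1) / n) := by
  have hn0 : (0:ℝ) < n := by exact_mod_cast hn
  set r : Fin (n+1) → ℝ := fun i => Y i / M i with hrdef
  have hr : ∀ i, 0 < r i := fun i => div_pos (hY i) (hM i)
  have hrs : ∑ i, M i * r i = 1 := by
    rw [← hYs]
    exact Finset.sum_congr rfl fun i _ => by
      rw [hrdef]; field_simp [(hM i).ne']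
  have hcore := stmt8_core n hn M r hM hMs hr hrs
  set A : ℝ := (∑ i, r i - 1) / n with hAdef
  have hnt : Nontrivial (Fin (n+1)) := Fin.nontrivial_iff_two_le.mpr (by omega)
  have hMlt : ∀ i, M i < 1 := by
    intro i
    obtain ⟨j, hj⟩ := exists_ne i
    calc M i < ∑ k, M k :=
          Finset.single_lt_sum hj (Finset.mem_univ i) (Finset.mem_univ j) (hM j)
            (fun k _ _ => (hM k).le)
      _ = 1 := hMs
  have hApos : 0 ≤ A := by
    have hdiff : ∑ i, r i - 1 = ∑ i, (1 - M i) * r i := by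
      have h : ∑ i, (1 - M i) * r i = (∑ i, r i) - ∑ i, M i * r i := by
        rw [← Finset.sum_sub_distrib]
        exact Finset.sum_congr rfl fun i _ => by ring
      rw [h, hrs]
    have hpos : 0 < ∑ i, (1 - M i) * r i :=
      Finset.sum_pos (fun i _ => mul_pos (by linarith [hMlt i]) (hr i))
        Finset.univ_nonempty
    rw [hAdef, hdiff]
    positivity
  have hprod : ∏ i, Y i = (∏ i, M i) * ∏ i, r i := by
    rw [← Finset.prod_mul_distrib]
    exact Finset.prod_congr rfl fun i _ => by
      rw [hrdef]
      field_simp [(hM i).ne']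
  have hMp : 0 < ∏ i, M i := Finset.prod_pos fun i _ => hM i
  calc (∏ i, Y i) ^ ((n:ℝ)⁻¹) ≤ ((∏ i, M i) * A ^ n) ^ ((n:ℝ)⁻¹) := by
        apply Real.rpow_le_rpow
        · exact (Finset.prod_pos fun i _ => hY i).le
        · rw [hprod]; exact mul_le_mul_of_nonneg_left hcore hMp.le
        · positivity
    _ = (∏ i, M i) ^ ((n:ℝ)⁻¹) * (A ^ n) ^ ((n:ℝ)⁻¹) :=
        Real.mul_rpow hMp.le (pow_nonneg hApos n)
    _ = (∏ i, M i) ^ ((n:ℝ)⁻¹) * A := by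
        rw [← Real.rpow_natCast A n, ← Real.rpow_mul hApos,
          mul_inv_cancel₀ hn0.ne', Real.rpow_one]

/-- Concavity step for the 1/n geometric mean on the simplex. -/
lemma stmt8_step (n : ℕ) (hn : 1 ≤ n) (Y Z : Fin (n+1) → ℝ)
    (hY : ∀ i, 0 < Y i) (hYs : ∑ i, Y i = 1)
    (hZ : ∀ i, 0 < Z i) (hZs : ∑ i, Z i = 1)
    (a b : ℝ) (ha : 0 ≤ a) (hb : 0 ≤ b) (hab : a + b = 1) :
    a * (∏ i, Y i) ^ ((n:ℝ)⁻¹) + b * (∏ i, Z i) ^ ((n:ℝ)⁻¹)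
      ≤ (∏ i, (a * Y i + b * Z i)) ^ ((n:ℝ)⁻¹) := by
  have hn0 : (0:ℝ) < n := by exact_mod_cast hn
  set M : Fin (n+1) → ℝ := fun i => a * Y i + b * Z i with hMdef
  have hMpos : ∀ i, 0 < M i := by
    intro i
    rcases eq_or_lt_of_le ha with h0 | h0
    · have : b = 1 := by linarith
      simp [hMdef, ← h0, this, hZ i]
    · have : 0 < a * Y i := mul_pos h0 (hY i)
      have : 0 ≤ b * Z i := mul_nonneg hb (hZ i).le
      simp only [hMdef]; linarith
  have hMs : ∑ i, M i = 1 := by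
    simp only [hMdef]
    rw [Finset.sum_add_distrib, ← Finset.mul_sum, ← Finset.mul_sum, hYs, hZs]
    linarith
  have h1 := stmt8_grad n hn Y M hY hYs hMpos hMs
  have h2 := stmt8_grad n hn Z M hZ hZs hMpos hMs
  have hHM : 0 ≤ (∏ i, M i) ^ ((n:ℝ)⁻¹) :=
    (Real.rpow_pos_of_pos (Finset.prod_pos fun i _ => hMpos i) _).le
  have hsum1 : ∑ i, (a * Y i + b * Z i) / M i = (n:ℝ) + 1 := by
    have h : ∑ i, (a * Y i + b * Z i) / M i = ∑ _i : Fin (n+1), (1:ℝ) :=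
      Finset.sum_congr rfl fun i _ => div_self (hMpos i).ne'
    rw [h, Finset.sum_const, Finset.card_univ, Fintype.card_fin]
    ring_nf
  have hexp : a * ((∑ i, Y i / M i - 1) / n) + b * ((∑ i, Z i / M i - 1) / n) = 1 := by
    have hmix : a * ∑ i, Y i / M i + b * ∑ i, Z i / M i = (n:ℝ) + 1 := by
      rw [← hsum1, Finset.mul_sum, Finset.mul_sum, ← Finset.sum_add_distrib]
      exact Finset.sum_congr rfl fun i _ => by rw [add_div, mul_div_assoc, mul_div_assoc]
    field_simp
    linarith
  calc a * (∏ i, Y i) ^ ((n:ℝ)⁻¹) + b * (∏ i, Z i) ^ ((n:ℝ)⁻¹)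
      ≤ a * ((∏ i, M i) ^ ((n:ℝ)⁻¹) * ((∑ i, Y i / M i - 1) / n))
        + b * ((∏ i, M i) ^ ((n:ℝ)⁻¹) * ((∑ i, Z i / M i - 1) / n)) :=
        add_le_add (mul_le_mul_of_nonneg_left h1 ha) (mul_le_mul_of_nonneg_left h2 hb)
    _ = (∏ i, M i) ^ ((n:ℝ)⁻¹)
        * (a * ((∑ i, Y i / M i - 1) / n) + b * ((∑ i, Z i / M i - 1) / n)) := by ring
    _ = (∏ i, M i) ^ ((n:ℝ)⁻¹) := by rw [hexp, mul_one]

set_option maxHeartbeats 1000000 in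
/-- On the standard open simplex `Δ`, with `x₀ = 1 - Σᵢ xᵢ`, `γ > -n` and
`η = 2/(n+γ)`, the function `v(x) = -(x₀x₁⋯xₙ)^η` is convex on `Δ` iff `γ ≥ n`. -/
theorem stmt_8 (n : ℕ) (hn : 1 ≤ n) (γ : ℝ) (hγ : -(n : ℝ) < γ)
    (η : ℝ) (hη : η = 2 / ((n : ℝ) + γ))
    (v : EuclideanSpace ℝ (Fin n) → ℝ)
    (hv : ∀ x : EuclideanSpace ℝ (Fin n), v x = -(((1 - ∑ i, x i) * ∏ i, x i) ^ η)) :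
    ConvexOn ℝ {x : EuclideanSpace ℝ (Fin n) | (∀ i, 0 < x i) ∧ ∑ i, x i < 1} v
      ↔ (n : ℝ) ≤ γ := by
  have hn0 : (0:ℝ) < n := by exact_mod_cast hn
  have hng : (0:ℝ) < (n:ℝ) + γ := by linarith
  have hηpos : 0 < η := by rw [hη]; positivity
  set S : Set (EuclideanSpace ℝ (Fin n)) :=
    {x | (∀ i, 0 < x i) ∧ ∑ i, x i < 1} with hS
  -- convexity of the set S
  have hSconv : Convex ℝ S := by
    intro x hx y hy a b ha hb hab
    obtain ⟨hx1, hx2⟩ := hx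
    obtain ⟨hy1, hy2⟩ := hy
    constructor
    · intro i
      have : (a • x + b • y) i = a * x i + b * y i := by
        simp [PiLp.add_apply, PiLp.smul_apply, smul_eq_mul]
      rw [this]
      rcases eq_or_lt_of_le ha with h0 | h0
      · have hb1 : b = 1 := by linarith
        rw [← h0, hb1]; simpa using hy1 i
      · nlinarith [mul_pos h0 (hx1 i), mul_nonneg hb (hy1 i).le]
    · have hsum : ∑ i, (a • x + b • y) i = a * ∑ i, x i + b * ∑ i, y i := by
        rw [Finset.mul_sum, Finset.mul_sum, ← Finset.sum_add_distrib]
        exact Finset.sum_congr rfl fun i _ => by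
          simp [PiLp.add_apply, PiLp.smul_apply, smul_eq_mul]
      show ∑ i, (a • x + b • y) i < 1
      rw [hsum]
      rcases eq_or_lt_of_le ha with h0 | h0
      · have hb1 : b = 1 := by linarith
        rw [← h0, hb1]; linarith
      · nlinarith
  constructor
  · -- convex ⇒ γ ≥ n
    intro hconv
    by_contra hlt
    push_neg at hlt
    set p : ℝ := n * η with hp
    have hp1 : 1 < p := by
      rw [hp, hη, mul_div_assoc', lt_div_iff₀ hng]
      linarith
    haveI : NeZero n := ⟨by omega⟩
    set xf : ℝ → EuclideanSpace ℝ (Fin n) :=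
      fun t => WithLp.toLp 2 (fun (i : Fin n) => if i = 0 then 1 - (n:ℝ)*t else t) with hxf
    have happ : ∀ t (i : Fin n), xf t i = if i = 0 then 1 - (n:ℝ)*t else t :=
      fun t i => rfl
    have hsum : ∀ t : ℝ, ∑ i, xf t i = 1 - t := by
      intro t
      have h1 : ∀ i : Fin n, xf t i
          = (if i = 0 then 1 - (n:ℝ)*t - t else 0) + t := by
        intro i
        by_cases h : i = 0 <;> simp [happ, h] <;> ring
      rw [Finset.sum_congr rfl (fun i _ => h1 i), Finset.sum_add_distrib,
        Finset.sum_ite_eq' Finset.univ (0 : Fin n) (fun _ => 1 - (n:ℝ)*t - t),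
        Finset.sum_const, Finset.card_univ, Fintype.card_fin]
      simp only [Finset.mem_univ, if_true, nsmul_eq_mul]
      ring
    have hprodf : ∀ t : ℝ, ∏ i, xf t i = (1 - (n:ℝ)*t) * t^(n-1) := by
      intro t
      rw [← Finset.mul_prod_erase Finset.univ _ (Finset.mem_univ (0 : Fin n))]
      have h0 : xf t 0 = 1 - (n:ℝ)*t := by simp [happ]
      have h2 : ∀ i ∈ Finset.univ.erase (0 : Fin n), xf t i = t := by
        intro i hi
        have : i ≠ 0 := (Finset.mem_erase.mp hi).1
        simp [happ, this]
      rw [h0, Finset.prod_congr rfl h2, Finset.prod_const,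
        Finset.card_erase_of_mem (Finset.mem_univ _), Finset.card_univ,
        Fintype.card_fin]
    have hP : ∀ t : ℝ, (1 - ∑ i, xf t i) * ∏ i, xf t i = t^n * (1 - (n:ℝ)*t) := by
      intro t
      rw [hsum, hprodf]
      have hn' : n - 1 + 1 = n := by omega
      calc (1 - (1 - t)) * ((1 - (n:ℝ)*t) * t^(n-1))
          = (t * t^(n-1)) * (1 - (n:ℝ)*t) := by ring
        _ = t^n * (1 - (n:ℝ)*t) := by rw [← pow_succ' t (n-1), hn']
    have hmem : ∀ t : ℝ, 0 < t → (n:ℝ)*t < 1 → xf t ∈ S := by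
      intro t ht0 ht1
      constructor
      · intro i
        rw [happ]
        split
        · linarith
        · exact ht0
      · rw [hsum]; linarith
    -- the rpow splitting
    have hsplit : ∀ t : ℝ, 0 < t → (n:ℝ)*t < 1 →
        (t^n * (1 - (n:ℝ)*t)) ^ η = t ^ p * (1 - (n:ℝ)*t) ^ η := by
      intro t ht0 ht1
      rw [Real.mul_rpow (by positivity) (by linarith), ← Real.rpow_natCast t n,
        ← Real.rpow_mul ht0.le, hp]
    -- midpoint identity
    have hmid : ∀ t : ℝ, (1/2 : ℝ) • xf t + (1/2 : ℝ) • xf (2*t) = xf (3/2*t) := by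
      intro t
      ext i
      have h : ((1/2 : ℝ) • xf t + (1/2 : ℝ) • xf (2*t)) i
          = 1/2 * xf t i + 1/2 * xf (2*t) i := by
        simp [PiLp.add_apply, PiLp.smul_apply, smul_eq_mul]
      rw [h, happ, happ, happ]
      by_cases h0 : i = 0 <;> simp [h0] <;> ring
    set G : ℝ → ℝ := fun t => (3/2:ℝ)^p * (1 - (n:ℝ)*(3/2*t))^η
      - 1/2 * (1 - (n:ℝ)*t)^η - 1/2 * (2:ℝ)^p * (1 - (n:ℝ)*(2*t))^η with hG
    have hGnonneg : ∀ t : ℝ, 0 < t → t < 1/(2*(n:ℝ)) → 0 ≤ G t := by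
      intro t ht0 ht1
      have hn2 : (0:ℝ) < 2*(n:ℝ) := by positivity
      have hnt : (n:ℝ)*t < 1/2 := by
        rw [lt_div_iff₀ hn2] at ht1; nlinarith
      have hA := hmem t ht0 (by linarith)
      have hB := hmem (2*t) (by linarith) (by push_cast; linarith)
      have hhalf : (0:ℝ) ≤ 1/2 := by norm_num
      have hconvx := hconv.2 hA hB hhalf hhalf (by norm_num)
      rw [hmid t] at hconvx
      rw [hv, hv, hv] at hconvx
      simp only [smul_eq_mul] at hconvx
      rw [hP, hP, hP] at hconvx
      rw [hsplit t ht0 (by linarith),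
        hsplit (2*t) (by linarith) (by push_cast; linarith),
        hsplit (3/2*t) (by linarith) (by push_cast; linarith)] at hconvx
      -- now : -((3/2 t)^p (…)^η) ≤ 1/2 * -(t^p …) + 1/2 * -((2t)^p …)
      have e1 : (3/2*t : ℝ) ^ p = (3/2:ℝ)^p * t^p :=
        Real.mul_rpow (by norm_num) ht0.le
      have e2 : (2*t : ℝ) ^ p = (2:ℝ)^p * t^p :=
        Real.mul_rpow (by norm_num) ht0.le
      rw [e1, e2] at hconvx
      have htp : (0:ℝ) < t^p := Real.rpow_pos_of_pos ht0 p
      have hGt : t^p * G t = (3/2:ℝ)^p * t^p * (1 - (n:ℝ)*(3/2*t))^η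
          - (1/2 * (t^p * (1 - (n:ℝ)*t)^η)
            + 1/2 * ((2:ℝ)^p * t^p * (1 - (n:ℝ)*(2*t))^η)) := by
        rw [hG]; ring
      have hkey : 0 ≤ t^p * G t := by rw [hGt]; linarith [hconvx]
      by_contra hneg
      push_neg at hneg
      nlinarith [mul_pos htp (neg_pos.mpr hneg)]
    -- take the limit t → 0+
    have hcont : ∀ c : ℝ, ContinuousAt (fun t : ℝ => (1 - (n:ℝ)*(c*t))^η) 0 := by
      intro c
      have h1 : ContinuousAt (fun s : ℝ => s ^ η) (1 - (n:ℝ)*(c*0)) :=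
        Real.continuousAt_rpow_const _ η (Or.inl (by norm_num))
      have h2 : ContinuousAt (fun t : ℝ => 1 - (n:ℝ)*(c*t)) 0 :=
        continuousAt_const.sub (continuousAt_const.mul
          (continuousAt_const.mul continuousAt_id))
      exact h2.rpow_const (Or.inr hηpos.le)
    have hGcont : ContinuousAt G 0 := by
      rw [hG]
      have h1 := hcont (3/2)
      have h2 : ContinuousAt (fun t : ℝ => (1 - (n:ℝ)*t)^η) 0 := by
        have := hcont 1
        simpa using this
      have h3 := hcont 2
      exact ((continuousAt_const.mul h1).sub
        (continuousAt_const.mul h2)).sub (continuousAt_const.mul h3)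
    have hG0 : G 0 = (3/2:ℝ)^p - 1/2 - 1/2 * (2:ℝ)^p := by
      rw [hG]
      norm_num
    have htend : Filter.Tendsto G (nhdsWithin 0 (Set.Ioi 0)) (nhds (G 0)) :=
      hGcont.continuousWithinAt.tendsto
    have hev : ∀ᶠ t in nhdsWithin (0:ℝ) (Set.Ioi 0), 0 ≤ G t := by
      have hmem' : Set.Ioo (0:ℝ) (1/(2*(n:ℝ))) ∈ nhdsWithin (0:ℝ) (Set.Ioi 0) :=
        Ioo_mem_nhdsGT_of_mem ⟨le_refl 0, by positivity⟩
      exact Filter.eventually_of_mem hmem' fun t ht => hGnonneg t ht.1 ht.2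
    have hge : 0 ≤ G 0 := ge_of_tendsto htend hev
    -- strict convexity of rpow gives the contradiction
    have hsc := (strictConvexOn_rpow hp1).2 (Set.mem_Ici.mpr (by norm_num : (0:ℝ) ≤ 1))
      (Set.mem_Ici.mpr (by norm_num : (0:ℝ) ≤ 2)) (by norm_num)
      (by norm_num : (0:ℝ) < 1/2) (by norm_num : (0:ℝ) < 1/2) (by norm_num)
    simp only [smul_eq_mul] at hsc
    rw [Real.one_rpow] at hsc
    have h32 : (1/2 : ℝ) * 1 + 1/2 * 2 = 3/2 := by norm_num
    rw [h32] at hsc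
    rw [hG0] at hge
    linarith
  · -- γ ≥ n ⇒ convex
    intro hγn
    set q : ℝ := n * η with hq
    have hq0 : 0 < q := by positivity
    have hq1 : q ≤ 1 := by
      rw [hq, hη]
      rw [mul_div_assoc']
      rw [div_le_one hng]
      linarith
    have key : ∀ x : EuclideanSpace ℝ (Fin n), x ∈ S →
        (∀ i, 0 < Fin.cons (α := fun _ => ℝ) (1 - ∑ i, x i) (fun i => x i) i) ∧
        (∑ i, Fin.cons (α := fun _ => ℝ) (1 - ∑ i, x i) (fun i => x i) i) = 1 := by
      intro x hx
      obtain ⟨hx1, hx2⟩ := hx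
      constructor
      · intro i
        refine Fin.cases ?_ ?_ i
        · rw [Fin.cons_zero]; linarith
        · intro j; rw [Fin.cons_succ]; exact hx1 j
      · rw [Fin.sum_cons]; ring
    refine ⟨hSconv, ?_⟩
    intro x hx y hy a b ha hb hab
    obtain ⟨hYpos, hYs⟩ := key x hx
    obtain ⟨hZpos, hZs⟩ := key y hy
    set Y : Fin (n+1) → ℝ := Fin.cons (α := fun _ => ℝ) (1 - ∑ i, x i) (fun i => x i) with hYdef
    set Z : Fin (n+1) → ℝ := Fin.cons (α := fun _ => ℝ) (1 - ∑ i, y i) (fun i => y i) with hZdef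
    have hm : a • x + b • y ∈ S := hSconv hx hy ha hb hab
    obtain ⟨hWpos, hWs⟩ := key _ hm
    set W : Fin (n+1) → ℝ :=
      Fin.cons (α := fun _ => ℝ) (1 - ∑ i, (a • x + b • y) i)
        (fun i => (a • x + b • y) i) with hWdef
    have hWcomb : W = fun i => a * Y i + b * Z i := by
      funext i
      refine Fin.cases ?_ ?_ i
      · rw [hWdef, hYdef, hZdef]
        simp only [Fin.cons_zero]
        have hsum : ∑ i, (a • x + b • y) i = a * ∑ i, x i + b * ∑ i, y i := by
          rw [Finset.mul_sum, Finset.mul_sum, ← Finset.sum_add_distrib]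
          exact Finset.sum_congr rfl fun i _ => by
            simp [PiLp.add_apply, PiLp.smul_apply, smul_eq_mul]
        rw [hsum]
        linarith
      · intro j
        rw [hWdef, hYdef, hZdef]
        simp only [Fin.cons_succ]
        simp [PiLp.add_apply, PiLp.smul_apply, smul_eq_mul]
    have hPY : (1 - ∑ i, x i) * ∏ i, x i = ∏ i, Y i := by
      rw [hYdef, Fin.prod_cons]
    have hPZ : (1 - ∑ i, y i) * ∏ i, y i = ∏ i, Z i := by
      rw [hZdef, Fin.prod_cons]
    have hPW : (1 - ∑ i, (a • x + b • y) i) * ∏ i, (a • x + b • y) i = ∏ i, W i := by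
      rw [hWdef, Fin.prod_cons]
    have hprodpos : ∀ (F : Fin (n+1) → ℝ), (∀ i, 0 < F i) → (0:ℝ) < ∏ i, F i :=
      fun F hF => Finset.prod_pos fun i _ => hF i
    have hpow : ∀ (F : Fin (n+1) → ℝ), (∀ i, 0 < F i) →
        (∏ i, F i) ^ η = ((∏ i, F i) ^ ((n:ℝ)⁻¹)) ^ q := by
      intro F hF
      rw [← Real.rpow_mul (hprodpos F hF).le]
      congr 1
      rw [hq]
      field_simp
    have h1 := stmt8_step n hn Y Z hYpos hYs hZpos hZs a b ha hb hab
    have hcomb_eq : (∏ i, (a * Y i + b * Z i)) = ∏ i, W i := by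
      rw [hWcomb]
    have hHY : 0 ≤ (∏ i, Y i) ^ ((n:ℝ)⁻¹) :=
      (Real.rpow_pos_of_pos (hprodpos Y hYpos) _).le
    have hHZ : 0 ≤ (∏ i, Z i) ^ ((n:ℝ)⁻¹) :=
      (Real.rpow_pos_of_pos (hprodpos Z hZpos) _).le
    have hcc := Real.concaveOn_rpow hq0.le hq1
    have h2 := hcc.2 (Set.mem_Ici.mpr hHY) (Set.mem_Ici.mpr hHZ) ha hb hab
    simp only [smul_eq_mul] at h2
    have h3 : (a * (∏ i, Y i) ^ ((n:ℝ)⁻¹) + b * (∏ i, Z i) ^ ((n:ℝ)⁻¹)) ^ q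
        ≤ ((∏ i, W i) ^ ((n:ℝ)⁻¹)) ^ q := by
      apply Real.rpow_le_rpow
      · positivity
      · rw [← hcomb_eq]; exact h1
      · exact hq0.le
    have hfinal : a * ((1 - ∑ i, x i) * ∏ i, x i) ^ η
          + b * ((1 - ∑ i, y i) * ∏ i, y i) ^ η
        ≤ ((1 - ∑ i, (a • x + b • y) i) * ∏ i, (a • x + b • y) i) ^ η := by
      rw [hPY, hPZ, hPW, hpow Y hYpos, hpow Z hZpos, hpow W hWpos]
      exact le_trans h2 h3
    rw [hv, hv, hv]
    simp only [smul_eq_mul]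
    linarith
end

section
/- Let Δ ⊂ ℝⁿ be the standard simplex and γ > n. Then v(x) = -(x₀x₁⋯xₙ)^(2/(n+γ)) satisfies C₁(-v)^(-γ) ≤ det D²v ≤ C₂(-v)^(-γ) on Δ for some constants C₁, C₂ > 0 depending only on n and γ, and v has infinite slope at every point of ∂Δ. -/
open Finset Filter Topology

namespace Stmt10

variable {n : ℕ}

noncomputable def gfn (y : EuclideanSpace ℝ (Fin n)) : ℝ := (1 - ∑ i, y i) * ∏ i, y i

noncomputable def gd (j : Fin n) (y : EuclideanSpace ℝ (Fin n)) : ℝ :=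
  (1 - ∑ i, y i) * (∏ l ∈ Finset.univ.erase j, y l) - ∏ i, y i

noncomputable def gdd (i j : Fin n) (x : EuclideanSpace ℝ (Fin n)) : ℝ :=
  (1 - ∑ k, x k) * (if i = j then 0 else ∏ l ∈ (Finset.univ.erase j).erase i, x l)
    - (∏ l ∈ Finset.univ.erase j, x l) - ∏ l ∈ Finset.univ.erase i, x l

noncomputable def sumL (n : ℕ) : EuclideanSpace ℝ (Fin n) →L[ℝ] ℝ :=
  ∑ k, EuclideanSpace.proj k

noncomputable def dP (y : EuclideanSpace ℝ (Fin n)) : EuclideanSpace ℝ (Fin n) →L[ℝ] ℝ :=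
  ∑ k, (∏ l ∈ Finset.univ.erase k, y l) • EuclideanSpace.proj k

noncomputable def dg (y : EuclideanSpace ℝ (Fin n)) : EuclideanSpace ℝ (Fin n) →L[ℝ] ℝ :=
  (1 - ∑ i, y i) • dP y + (∏ i, y i) • (-sumL n)

lemma hasF_coord (k : Fin n) (y : EuclideanSpace ℝ (Fin n)) :
    HasFDerivAt (fun z : EuclideanSpace ℝ (Fin n) => z k)
      (EuclideanSpace.proj (𝕜 := ℝ) k) y :=
  by simpa using (EuclideanSpace.proj (𝕜 := ℝ) k).hasFDerivAt (x := y)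

lemma hasF_sum (y : EuclideanSpace ℝ (Fin n)) :
    HasFDerivAt (fun z : EuclideanSpace ℝ (Fin n) => ∑ i, z i) (sumL n) y :=
  HasFDerivAt.fun_sum fun k _ => hasF_coord k y

lemma hasF_P (y : EuclideanSpace ℝ (Fin n)) :
    HasFDerivAt (fun z : EuclideanSpace ℝ (Fin n) => ∏ i, z i) (dP y) y :=
  HasFDerivAt.finset_prod fun k _ => hasF_coord k y

lemma hasF_g (y : EuclideanSpace ℝ (Fin n)) : HasFDerivAt gfn (dg y) y := by
  have h1 : HasFDerivAt (fun z : EuclideanSpace ℝ (Fin n) => 1 - ∑ i, z i) (-sumL n) y :=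
    (hasF_sum y).const_sub 1
  exact h1.mul (hasF_P y)

lemma dP_apply (y : EuclideanSpace ℝ (Fin n)) (j : Fin n) :
    dP y (EuclideanSpace.single j 1) = ∏ l ∈ Finset.univ.erase j, y l := by
  simp [dP, ContinuousLinearMap.sum_apply, EuclideanSpace.single_apply]

lemma sumL_apply (j : Fin n) : sumL n (EuclideanSpace.single j 1) = 1 := by
  simp [sumL, ContinuousLinearMap.sum_apply, EuclideanSpace.single_apply]

lemma dg_apply (y : EuclideanSpace ℝ (Fin n)) (j : Fin n) :
    dg y (EuclideanSpace.single j 1) = gd j y := by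
  simp [dg, gd, dP_apply, sumL_apply]
  ring

noncomputable def dQ (j : Fin n) (x : EuclideanSpace ℝ (Fin n)) :
    EuclideanSpace ℝ (Fin n) →L[ℝ] ℝ :=
  ∑ k ∈ Finset.univ.erase j, (∏ l ∈ (Finset.univ.erase j).erase k, x l) • EuclideanSpace.proj k

noncomputable def dgd (j : Fin n) (x : EuclideanSpace ℝ (Fin n)) :
    EuclideanSpace ℝ (Fin n) →L[ℝ] ℝ :=
  ((1 - ∑ i, x i) • dQ j x + (∏ l ∈ Finset.univ.erase j, x l) • (-sumL n)) - dP x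

lemma hasF_Q (j : Fin n) (x : EuclideanSpace ℝ (Fin n)) :
    HasFDerivAt (fun z : EuclideanSpace ℝ (Fin n) => ∏ l ∈ Finset.univ.erase j, z l)
      (dQ j x) x :=
  HasFDerivAt.finset_prod fun k _ => hasF_coord k x

lemma hasF_gd (j : Fin n) (x : EuclideanSpace ℝ (Fin n)) :
    HasFDerivAt (gd j) (dgd j x) x := by
  have h1 : HasFDerivAt (fun z : EuclideanSpace ℝ (Fin n) => 1 - ∑ i, z i) (-sumL n) x :=
    (hasF_sum x).const_sub 1
  exact (h1.mul (hasF_Q j x)).sub (hasF_P x)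

lemma dQ_apply (j : Fin n) (x : EuclideanSpace ℝ (Fin n)) (i : Fin n) :
    dQ j x (EuclideanSpace.single i 1)
      = if i = j then 0 else ∏ l ∈ (Finset.univ.erase j).erase i, x l := by
  by_cases h : i = j
  · subst h
    simp [dQ, ContinuousLinearMap.sum_apply, EuclideanSpace.single_apply,
      Finset.sum_ite_eq]
  · simp [dQ, ContinuousLinearMap.sum_apply, EuclideanSpace.single_apply,
      Finset.sum_ite_eq, h]

lemma dgd_apply (j : Fin n) (x : EuclideanSpace ℝ (Fin n)) (i : Fin n) :
    dgd j x (EuclideanSpace.single i 1) = gdd i j x := by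
  simp [dgd, gdd, dQ_apply, dP_apply, sumL_apply]
  ring

noncomputable def Hent (α : ℝ) (i j : Fin n) (x : EuclideanSpace ℝ (Fin n)) : ℝ :=
  -(α * ((α - 1) * gfn x ^ (α - 2) * gd i x * gd j x + gfn x ^ (α - 1) * gdd i j x))

noncomputable def Mj (α : ℝ) (j : Fin n) (x : EuclideanSpace ℝ (Fin n)) :
    EuclideanSpace ℝ (Fin n) →L[ℝ] ℝ :=
  -((α * gfn x ^ (α - 1)) • dgd j x
    + gd j x • (α • (((α - 1) * gfn x ^ (α - 1 - 1)) • dg x)))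

lemma hasF_h (α : ℝ) (j : Fin n) (x : EuclideanSpace ℝ (Fin n)) (hg : gfn x ≠ 0) :
    HasFDerivAt (fun y => -(α * gfn y ^ (α - 1) * gd j y)) (Mj α j x) x := by
  have h1 : HasFDerivAt (fun y => gfn y ^ (α - 1))
      (((α - 1) * gfn x ^ (α - 1 - 1)) • dg x) x :=
    (hasF_g x).rpow_const (Or.inl hg)
  exact (((h1.const_mul α).mul (hasF_gd j x)).neg)

lemma Mj_apply (α : ℝ) (j : Fin n) (x : EuclideanSpace ℝ (Fin n)) (i : Fin n) :
    Mj α j x (EuclideanSpace.single i 1) = Hent α i j x := by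
  have h2 : α - 1 - 1 = α - 2 := by ring
  simp [Mj, Hent, dgd_apply, dg_apply, h2]
  ring

lemma contDiff_coord (i : Fin n) : ContDiff ℝ 2 (fun z : EuclideanSpace ℝ (Fin n) => z i) := by
  have := (EuclideanSpace.proj (𝕜 := ℝ) (i := i)).contDiff (n := 2)
  simpa using this

lemma contDiff_gfn : ContDiff ℝ 2 (gfn (n := n)) := by
  have hs : ContDiff ℝ 2 (fun z : EuclideanSpace ℝ (Fin n) => ∑ i, z i) :=
    ContDiff.sum fun i _ => contDiff_coord i
  have hp : ContDiff ℝ 2 (fun z : EuclideanSpace ℝ (Fin n) => ∏ i, z i) :=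
    contDiff_prod fun i _ => contDiff_coord i
  exact (contDiff_const.sub hs).mul hp

lemma isOpen_simplex :
    IsOpen {y : EuclideanSpace ℝ (Fin n) | (∀ i, 0 < y i) ∧ ∑ i, y i < 1} := by
  have hco : ∀ i : Fin n, Continuous (fun z : EuclideanSpace ℝ (Fin n) => z i) := by
    intro i
    have := (EuclideanSpace.proj (𝕜 := ℝ) (i := i)).continuous
    simpa using this
  have h1 : {y : EuclideanSpace ℝ (Fin n) | (∀ i, 0 < y i) ∧ ∑ i, y i < 1}
      = (⋂ i, {y : EuclideanSpace ℝ (Fin n) | 0 < y i})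
        ∩ {y : EuclideanSpace ℝ (Fin n) | ∑ i, y i < 1} := by
    ext y; simp [Set.mem_iInter]
  rw [h1]
  exact (isOpen_iInter_of_finite fun i => isOpen_lt continuous_const (hco i)).inter
    (isOpen_lt (continuous_finset_sum _ fun i _ => hco i) continuous_const)

lemma gfn_pos (y : EuclideanSpace ℝ (Fin n)) (hy0 : ∀ i, 0 < y i) (hy1 : ∑ i, y i < 1) :
    0 < gfn y :=
  mul_pos (by linarith) (Finset.prod_pos fun i _ => hy0 i)

lemma hess_entry (α : ℝ) (v : EuclideanSpace ℝ (Fin n) → ℝ)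
    (hv : ∀ z, v z = -(gfn z ^ α)) (x : EuclideanSpace ℝ (Fin n))
    (hx0 : ∀ i, 0 < x i) (hx1 : ∑ i, x i < 1) (i j : Fin n) :
    iteratedFDeriv ℝ 2 v x ![EuclideanSpace.single i 1, EuclideanSpace.single j 1]
      = Hent α i j x := by
  have hvf : v = fun z => -(gfn z ^ α) := funext hv
  set U := {y : EuclideanSpace ℝ (Fin n) | (∀ i, 0 < y i) ∧ ∑ i, y i < 1} with hUdef
  have hxU : x ∈ U := ⟨hx0, hx1⟩
  have hgU : ∀ y ∈ U, 0 < gfn y := fun y hy => gfn_pos y hy.1 hy.2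
  have hfd : ∀ y ∈ U, fderiv ℝ v y = -((α * gfn y ^ (α - 1)) • dg y) := by
    intro y hy
    have h1 : HasFDerivAt v (-((α * gfn y ^ (α - 1)) • dg y)) y := by
      rw [hvf]
      exact ((hasF_g y).rpow_const (Or.inl (ne_of_gt (hgU y hy)))).neg
    exact h1.fderiv
  have hC2 : ContDiffAt ℝ 2 v x := by
    rw [hvf]
    exact (((Real.contDiffAt_rpow_const_of_ne
      (ne_of_gt (hgU x hxU))).comp x contDiff_gfn.contDiffAt)).neg
  have hd1 : DifferentiableAt ℝ (fderiv ℝ v) x :=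
    (hC2.fderiv_right (m := 1) (by norm_num)).differentiableAt one_ne_zero
  have step1 : iteratedFDeriv ℝ 2 v x
      ![EuclideanSpace.single i 1, EuclideanSpace.single j 1]
      = fderiv ℝ (fderiv ℝ v) x (EuclideanSpace.single i 1) (EuclideanSpace.single j 1) := by
    rw [iteratedFDeriv_two_apply]
    simp
  have step2 : fderiv ℝ (fun y => fderiv ℝ v y (EuclideanSpace.single j 1)) x
      = (fderiv ℝ (fderiv ℝ v) x).flip (EuclideanSpace.single j 1) := by
    rw [fderiv_clm_apply hd1 (differentiableAt_const _)]
    simp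
  have step3 : (fun y => fderiv ℝ v y (EuclideanSpace.single j 1))
      =ᶠ[nhds x] fun y => -(α * gfn y ^ (α - 1) * gd j y) := by
    filter_upwards [isOpen_simplex.mem_nhds hxU] with y hy
    rw [hfd y hy]
    simp [dg_apply]
  have step4 : fderiv ℝ (fun y => fderiv ℝ v y (EuclideanSpace.single j 1)) x
      = Mj α j x := by
    rw [step3.fderiv_eq]
    exact (hasF_h α j x (ne_of_gt (hgU x hxU))).fderiv
  rw [step1]
  have h4 := step4.symm.trans step2
  have h5 := congrArg (fun L => L (EuclideanSpace.single i 1)) h4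
  simp only [ContinuousLinearMap.flip_apply] at h5
  rw [← h5, Mj_apply]

set_option maxHeartbeats 2000000 in
lemma det_formula (hn : 1 ≤ n) {α γ : ℝ} (hα : α = 2 / ((n : ℝ) + γ)) (hγ : (n : ℝ) < γ)
    (x : EuclideanSpace ℝ (Fin n)) (hx0 : ∀ i, 0 < x i) (hx1 : ∑ i, x i < 1) :
    Matrix.det (Matrix.of fun i j : Fin n => Hent α i j x)
      = α ^ n * (α + (1 - ((n : ℝ) + 1) * α) * ((1 - ∑ i, x i) ^ 2 + ∑ i, (x i) ^ 2))
          * gfn x ^ (-(α * γ)) := by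
  have hnR : (1 : ℝ) ≤ (n : ℝ) := by exact_mod_cast hn
  set x₀ : ℝ := 1 - ∑ i, x i with hx₀def
  set P : ℝ := ∏ i, x i with hPdef
  have hx₀ : 0 < x₀ := by simp only [hx₀def]; linarith
  have hP : 0 < P := Finset.prod_pos fun i _ => hx0 i
  have hgx : gfn x = x₀ * P := by rw [gfn]
  have hg : 0 < gfn x := by rw [hgx]; positivity
  have hQ : ∀ i : Fin n, (∏ l ∈ Finset.univ.erase i, x l) * x i = P :=
    fun i => Finset.prod_erase_mul _ _ (mem_univ i)
  have hR : ∀ i j : Fin n, i ≠ j →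
      (∏ l ∈ (Finset.univ.erase j).erase i, x l) * x i * x j = P := by
    intro i j hij
    have h1 : (∏ l ∈ (Finset.univ.erase j).erase i, x l) * x i
        = ∏ l ∈ Finset.univ.erase j, x l :=
      Finset.prod_erase_mul _ _ (Finset.mem_erase.mpr ⟨hij, mem_univ i⟩)
    rw [h1, hQ j]
  set c : ℝ := α * gfn x ^ (α - 2) * P ^ 2 with hcdef
  set K : Matrix (Fin n) (Fin n) ℝ := Matrix.of fun i j =>
    (if i = j then (x₀ / x i) ^ 2 else 0) + 1
      - α * ((x₀ - x i) / x i) * ((x₀ - x j) / x j) with hKdef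
  have step_entry : (Matrix.of fun i j : Fin n => Hent α i j x) = c • K := by
    ext i j
    simp only [Matrix.smul_apply, Matrix.of_apply, smul_eq_mul, hKdef]
    have hrp : gfn x ^ (α - 1) = gfn x ^ (α - 2) * gfn x := by
      rw [← Real.rpow_add_one (ne_of_gt hg) (α - 2)]
      congr 1
      ring
    simp only [Hent, gd, gdd, ← hx₀def, ← hPdef, hrp, hcdef]
    have hQi := hQ i
    have hQj := hQ j
    by_cases h : i = j
    · subst h
      simp only [if_pos rfl, ↓reduceIte]
      have hxi := ne_of_gt (hx0 i)
      have hQi' : (∏ l ∈ Finset.univ.erase i, x l) = P / x i := by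
        field_simp
        exact hQi
      rw [hQi', hgx]
      field_simp
      ring
    · simp only [if_neg h]
      have hxi := ne_of_gt (hx0 i)
      have hxj := ne_of_gt (hx0 j)
      have hQi' : (∏ l ∈ Finset.univ.erase i, x l) = P / x i := by
        field_simp; exact hQ i
      have hQj' : (∏ l ∈ Finset.univ.erase j, x l) = P / x j := by
        field_simp; exact hQ j
      have hRij : (∏ l ∈ (Finset.univ.erase j).erase i, x l) = P / (x i * x j) := by
        rw [eq_div_iff (by positivity)]
        rw [← mul_assoc]
        exact hR i j h
      rw [hQi', hQj', hRij, hgx]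
      field_simp
      ring
  have step_det1 : Matrix.det (Matrix.of fun i j : Fin n => Hent α i j x)
      = c ^ n * K.det := by
    rw [step_entry, Matrix.det_smul]
    simp [Fintype.card_fin]
  set d : Fin n → ℝ := fun i => (x₀ / x i) ^ 2 with hddef
  set A : Matrix (Fin n) (Fin 2) ℝ :=
    Matrix.of fun i b => if b = 0 then 1 else -(α * ((x₀ - x i) / x i)) with hAdef
  set B : Matrix (Fin 2) (Fin n) ℝ :=
    Matrix.of fun b j => if b = 0 then 1 else (x₀ - x j) / x j with hBdef
  have hdne : ∀ i, d i ≠ 0 := by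
    intro i
    have := hx0 i
    simp only [hddef]
    positivity
  set Di : Matrix (Fin n) (Fin n) ℝ := Matrix.diagonal fun i => (d i)⁻¹ with hDidef
  have hK : K = Matrix.diagonal d + A * B := by
    ext i j
    simp only [hKdef, Matrix.of_apply, Matrix.add_apply, Matrix.diagonal_apply,
      Matrix.mul_apply, Fin.sum_univ_two, hAdef, hBdef, hddef]
    norm_num
    by_cases h : i = j <;> simp [h] <;> ring
  have hfact : Matrix.diagonal d + A * B = Matrix.diagonal d * (1 + Di * A * B) := by
    rw [Matrix.mul_add, Matrix.mul_one, ← Matrix.mul_assoc, ← Matrix.mul_assoc,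
      hDidef, Matrix.diagonal_mul_diagonal]
    have h1 : (fun i => d i * (d i)⁻¹) = fun _ : Fin n => (1 : ℝ) :=
      funext fun i => mul_inv_cancel₀ (hdne i)
    rw [h1, Matrix.diagonal_one, Matrix.one_mul]
  have hdet2 : K.det = (∏ i, d i) * (1 + B * (Di * A)).det := by
    rw [hK, hfact, Matrix.det_mul, Matrix.det_diagonal, Matrix.det_one_add_mul_comm]
  set M2 : Matrix (Fin 2) (Fin 2) ℝ := B * (Di * A) with hM2def
  have hM2 : ∀ a b, M2 a b = ∑ jj, B a jj * ((d jj)⁻¹ * A jj b) := by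
    intro a b
    simp [hM2def, Matrix.mul_apply, hDidef, Matrix.diagonal_apply, Finset.mul_sum]
  have hdet3 : (1 + M2).det = (1 + M2 0 0) * (1 + M2 1 1) - M2 0 1 * M2 1 0 := by
    simp [Matrix.det_fin_two, Matrix.add_apply, Matrix.one_apply]
  have hsum : ∑ i, x i = 1 - x₀ := by rw [hx₀def]; ring
  set Ssq : ℝ := ∑ i, (x i) ^ 2 with hSsqdef
  have hx₀ne : x₀ ≠ 0 := ne_of_gt hx₀
  have h00 : M2 0 0 = Ssq / x₀ ^ 2 := by
    rw [hM2 0 0]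
    have h1 : ∀ jj ∈ Finset.univ, B 0 jj * ((d jj)⁻¹ * A jj 0) = (x jj) ^ 2 / x₀ ^ 2 := by
      intro jj _
      have hxj := ne_of_gt (hx0 jj)
      simp only [hAdef, hBdef, hddef, Matrix.of_apply, if_pos rfl, ↓reduceIte]
      field_simp
    rw [Finset.sum_congr rfl h1, ← Finset.sum_div, hSsqdef]
  have hsum2 : ∑ jj, (x₀ * x jj - x jj ^ 2) = x₀ * (1 - x₀) - Ssq := by
    rw [Finset.sum_sub_distrib, ← Finset.mul_sum, hsum, ← hSsqdef]
  have hsum3 : ∑ jj, (x₀ ^ 2 - 2 * x₀ * x jj + x jj ^ 2)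
      = (n : ℝ) * x₀ ^ 2 - 2 * x₀ * (1 - x₀) + Ssq := by
    rw [Finset.sum_add_distrib, Finset.sum_sub_distrib, Finset.sum_const, card_univ,
      Fintype.card_fin, nsmul_eq_mul, ← Finset.mul_sum, hsum, ← hSsqdef]
  have h01 : M2 0 1 = -(α / x₀ ^ 2) * (x₀ * (1 - x₀) - Ssq) := by
    rw [hM2 0 1]
    have h1 : ∀ jj ∈ Finset.univ, B 0 jj * ((d jj)⁻¹ * A jj 1)
        = -(α / x₀ ^ 2) * (x₀ * x jj - x jj ^ 2) := by
      intro jj _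
      have hxj := ne_of_gt (hx0 jj)
      simp only [hAdef, hBdef, hddef, Matrix.of_apply]
      norm_num
      field_simp
    rw [Finset.sum_congr rfl h1, ← Finset.mul_sum, hsum2]
  have h10 : M2 1 0 = (x₀ * (1 - x₀) - Ssq) / x₀ ^ 2 := by
    rw [hM2 1 0]
    have h1 : ∀ jj ∈ Finset.univ, B 1 jj * ((d jj)⁻¹ * A jj 0)
        = (x₀ * x jj - x jj ^ 2) / x₀ ^ 2 := by
      intro jj _
      have hxj := ne_of_gt (hx0 jj)
      simp only [hAdef, hBdef, hddef, Matrix.of_apply]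
      norm_num
      field_simp
    rw [Finset.sum_congr rfl h1, ← Finset.sum_div, hsum2]
  have h11 : M2 1 1
      = -(α / x₀ ^ 2) * ((n : ℝ) * x₀ ^ 2 - 2 * x₀ * (1 - x₀) + Ssq) := by
    rw [hM2 1 1]
    have h1 : ∀ jj ∈ Finset.univ, B 1 jj * ((d jj)⁻¹ * A jj 1)
        = -(α / x₀ ^ 2) * (x₀ ^ 2 - 2 * x₀ * x jj + x jj ^ 2) := by
      intro jj _
      have hxj := ne_of_gt (hx0 jj)
      simp only [hAdef, hBdef, hddef, Matrix.of_apply]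
      norm_num
      field_simp
      ring
    rw [Finset.sum_congr rfl h1, ← Finset.mul_sum, hsum3]
  have hprodd : ∏ i, d i = x₀ ^ (2 * n) / P ^ 2 := by
    simp only [hddef]
    rw [Finset.prod_pow, Finset.prod_div_distrib, Finset.prod_const, card_univ,
      Fintype.card_fin, hPdef, div_pow, ← pow_mul, Nat.mul_comm]
  have hE : (1 + Ssq / x₀ ^ 2)
        * (1 + -(α / x₀ ^ 2) * ((n : ℝ) * x₀ ^ 2 - 2 * x₀ * (1 - x₀) + Ssq))
        - -(α / x₀ ^ 2) * (x₀ * (1 - x₀) - Ssq) * ((x₀ * (1 - x₀) - Ssq) / x₀ ^ 2)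
      = (α + (1 - ((n : ℝ) + 1) * α) * (x₀ ^ 2 + Ssq)) / x₀ ^ 2 := by
    field_simp
    ring
  have hKdet : K.det = (x₀ ^ (2 * n) / P ^ 2)
      * ((α + (1 - ((n : ℝ) + 1) * α) * (x₀ ^ 2 + Ssq)) / x₀ ^ 2) := by
    rw [hdet2, hdet3, h00, h01, h10, h11, hprodd, hE]
  -- final assembly
  have hns : (0 : ℝ) < (n : ℝ) + γ := by linarith
  have hαval : α * ((n : ℝ) + γ) = 2 := by rw [hα]; field_simp
  have key : gfn x ^ ((α - 2) * (n : ℝ)) * ((P ^ 2) ^ n * x₀ ^ (2 * n))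
      = gfn x ^ (-(α * γ)) * (P ^ 2 * x₀ ^ 2) := by
    have h1 : (P ^ 2) ^ n * x₀ ^ (2 * n) = gfn x ^ (2 * n) := by
      calc (P ^ 2) ^ n * x₀ ^ (2 * n) = P ^ (2 * n) * x₀ ^ (2 * n) := by rw [← pow_mul]
        _ = (P * x₀) ^ (2 * n) := (mul_pow P x₀ (2 * n)).symm
        _ = gfn x ^ (2 * n) := by rw [hgx, mul_comm x₀ P]
    have h2 : P ^ 2 * x₀ ^ 2 = gfn x ^ 2 := by rw [hgx, mul_pow]; ring
    rw [h1, h2, ← Real.rpow_natCast (gfn x) (2 * n), ← Real.rpow_natCast (gfn x) 2,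
      ← Real.rpow_add hg, ← Real.rpow_add hg]
    congr 1
    push_cast
    linear_combination hαval
  have e1 : (gfn x ^ (α - 2)) ^ n = gfn x ^ ((α - 2) * (n : ℝ)) := by
    rw [← Real.rpow_natCast (gfn x ^ (α - 2)) n, ← Real.rpow_mul hg.le]
  rw [step_det1, hKdet, hcdef, mul_pow, mul_pow, e1]
  have hP2 : (P : ℝ) ^ 2 ≠ 0 := by positivity
  have hx₀2 : (x₀ : ℝ) ^ 2 ≠ 0 := by positivity
  field_simp
  linear_combination (α ^ n * (α + (1 - ((n : ℝ) + 1) * α) * (x₀ ^ 2 + Ssq))) * key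

lemma coord_affine (s : ℝ) (p y : EuclideanSpace ℝ (Fin n)) (i : Fin n) :
    ((1 - s) • p + s • y) i = (1 - s) * p i + s * y i := by
  simp [PiLp.add_apply, PiLp.smul_apply, smul_eq_mul]

lemma sum_affine (s : ℝ) (p y : EuclideanSpace ℝ (Fin n)) :
    ∑ i, ((1 - s) • p + s • y) i = (1 - s) * (∑ i, p i) + s * ∑ i, y i := by
  simp only [coord_affine]
  rw [Finset.sum_add_distrib, ← Finset.mul_sum, ← Finset.mul_sum]

lemma slope_infinite (hn : 1 ≤ n) {α : ℝ} (hα0 : 0 < α) (hαn : (n : ℝ) * α < 1)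
    (v : EuclideanSpace ℝ (Fin n) → ℝ) (hv : ∀ z, v z = -(gfn z ^ α))
    (p : EuclideanSpace ℝ (Fin n))
    (hp : p ∈ frontier {y : EuclideanSpace ℝ (Fin n) | (∀ i, 0 < y i) ∧ ∑ i, y i < 1})
    (y : EuclideanSpace ℝ (Fin n)) (hy0 : ∀ i, 0 < y i) (hy1 : ∑ i, y i < 1) :
    Tendsto (fun s : ℝ => (v ((1 - s) • p + s • y) - v p) / s)
      (nhdsWithin 0 (Set.Ioi 0)) atBot := by
  have hnR : (1 : ℝ) ≤ (n : ℝ) := by exact_mod_cast hn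
  -- p is in the closed simplex but not in the open one
  have hfr := hp
  rw [IsOpen.frontier_eq isOpen_simplex] at hfr
  have hpcl := hfr.1
  have hpnot := hfr.2
  have hC : closure {y : EuclideanSpace ℝ (Fin n) | (∀ i, 0 < y i) ∧ ∑ i, y i < 1}
      ⊆ {y : EuclideanSpace ℝ (Fin n) | (∀ i, 0 ≤ y i) ∧ ∑ i, y i ≤ 1} := by
    apply closure_minimal
    · intro z hz; exact ⟨fun i => (hz.1 i).le, hz.2.le⟩
    · have hco : ∀ i : Fin n, Continuous (fun z : EuclideanSpace ℝ (Fin n) => z i) := by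
        intro i
        have := (EuclideanSpace.proj (𝕜 := ℝ) (i := i)).continuous
        simpa using this
      have h1 : {y : EuclideanSpace ℝ (Fin n) | (∀ i, 0 ≤ y i) ∧ ∑ i, y i ≤ 1}
          = (⋂ i, {y : EuclideanSpace ℝ (Fin n) | 0 ≤ y i})
            ∩ {y : EuclideanSpace ℝ (Fin n) | ∑ i, y i ≤ 1} := by
        ext z; simp [Set.mem_iInter]
      rw [h1]
      exact (isClosed_iInter fun i => isClosed_le continuous_const (hco i)).inter
        (isClosed_le (continuous_finset_sum _ fun i _ => hco i) continuous_const)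
  obtain ⟨hp0, hp1⟩ := hC hpcl
  -- g p = 0 hence v p = 0
  have hgp : gfn p = 0 := by
    rw [gfn]
    rcases not_and_or.mp hpnot with h | h
    · push_neg at h
      obtain ⟨i, hi⟩ := h
      have : p i = 0 := le_antisymm hi (hp0 i)
      rw [Finset.prod_eq_zero (mem_univ i) this, mul_zero]
    · have : ∑ i, p i = 1 := le_antisymm hp1 (not_lt.mp h)
      rw [this]; ring
  have hvp : v p = 0 := by rw [hv, hgp, Real.zero_rpow (ne_of_gt hα0), neg_zero]
  -- lower bound for g along the segment
  have hlow : ∃ c > (0 : ℝ), ∀ s ∈ Set.Ioc (0 : ℝ) (1 / 2),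
      c * s ^ n ≤ gfn ((1 - s) • p + s • y) := by
    have hzge : ∀ s ∈ Set.Ioc (0 : ℝ) (1 / 2), ∀ i,
        s * y i ≤ ((1 - s) • p + s • y) i := by
      intro s hs i
      rw [coord_affine]
      have : 0 ≤ (1 - s) * p i := mul_nonneg (by linarith [hs.2]) (hp0 i)
      linarith
    have hx0z : ∀ s : ℝ, 1 - ∑ i, ((1 - s) • p + s • y) i
        = (1 - s) * (1 - ∑ i, p i) + s * (1 - ∑ i, y i) := by
      intro s; rw [sum_affine]; ring
    by_cases hc : 1 / ((n : ℝ) + 1) ≤ 1 - ∑ i, p i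
    · have hPy : (0:ℝ) < ∏ i, y i := Finset.prod_pos fun i _ => hy0 i
      refine ⟨(1 / (2 * ((n : ℝ) + 1))) * ∏ i, y i, by positivity, ?_⟩
      intro s hs
      have hs0 := hs.1
      have hs2 := hs.2
      have h1 : (1 / (2 * ((n : ℝ) + 1))) ≤ 1 - ∑ i, ((1 - s) • p + s • y) i := by
        rw [hx0z]
        have hA : (1 : ℝ) / 2 * (1 / ((n : ℝ) + 1)) ≤ (1 - s) * (1 - ∑ i, p i) := by
          apply mul_le_mul (by linarith) hc (by positivity) (by linarith)
        have hB : 0 ≤ s * (1 - ∑ i, y i) := mul_nonneg hs0.le (by linarith)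
        have : (1 : ℝ) / (2 * ((n : ℝ) + 1)) = 1 / 2 * (1 / ((n : ℝ) + 1)) := by
          rw [div_mul_div_comm]; norm_num
        linarith
      have h2 : s ^ n * ∏ i, y i ≤ ∏ i, ((1 - s) • p + s • y) i := by
        have := Finset.prod_le_prod (s := Finset.univ)
          (f := fun i => s * y i) (g := fun i => ((1 - s) • p + s • y) i)
          (fun i _ => mul_nonneg hs0.le (hy0 i).le) (fun i _ => hzge s hs i)
        calc s ^ n * ∏ i, y i = ∏ i, (s * y i) := by
              rw [Finset.prod_mul_distrib, Finset.prod_const, card_univ, Fintype.card_fin]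
          _ ≤ _ := this
      calc (1 / (2 * ((n : ℝ) + 1))) * (∏ i, y i) * s ^ n
          = (1 / (2 * ((n : ℝ) + 1))) * (s ^ n * ∏ i, y i) := by ring
        _ ≤ (1 - ∑ i, ((1 - s) • p + s • y) i) * ∏ i, ((1 - s) • p + s • y) i := by
            have hpos : (0:ℝ) < 1 / (2 * ((n : ℝ) + 1)) := by positivity
            apply mul_le_mul h1 h2 (by positivity) (by linarith)
        _ = gfn ((1 - s) • p + s • y) := by rw [gfn]
    · push_neg at hc
      have hex : ∃ i₀ : Fin n, 1 / ((n : ℝ) + 1) ≤ p i₀ := by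
        by_contra h
        push_neg at h
        have hne : (Finset.univ : Finset (Fin n)).Nonempty := by
          haveI : Nonempty (Fin n) := ⟨⟨0, hn⟩⟩
          exact Finset.univ_nonempty
        have := Finset.sum_lt_sum_of_nonempty hne (fun i _ => h i)
        rw [Finset.sum_const, card_univ, Fintype.card_fin, nsmul_eq_mul] at this
        have hq : (n : ℝ) * (1 / ((n : ℝ) + 1)) = 1 - 1 / ((n : ℝ) + 1) := by
          field_simp
          ring
        linarith
      obtain ⟨i₀, hi₀⟩ := hex
      refine ⟨(1 / (2 * ((n : ℝ) + 1))) * ((1 - ∑ i, y i) * ∏ l ∈ Finset.univ.erase i₀, y l),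
        by
          have h1 : (0:ℝ) < 1 - ∑ i, y i := by linarith
          have h2 : 0 < ∏ l ∈ Finset.univ.erase i₀, y l :=
            Finset.prod_pos fun l _ => hy0 l
          positivity, ?_⟩
      intro s hs
      have hs0 := hs.1
      have hs2 := hs.2
      have hA : s * (1 - ∑ i, y i) ≤ 1 - ∑ i, ((1 - s) • p + s • y) i := by
        rw [hx0z]
        have : 0 ≤ (1 - s) * (1 - ∑ i, p i) := mul_nonneg (by linarith) (by linarith)
        linarith
      have hB : 1 / (2 * ((n : ℝ) + 1)) ≤ ((1 - s) • p + s • y) i₀ := by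
        rw [coord_affine]
        have h1 : (1 : ℝ) / 2 * (1 / ((n : ℝ) + 1)) ≤ (1 - s) * p i₀ :=
          mul_le_mul (by linarith) hi₀ (by positivity) (by linarith)
        have h2 : 0 ≤ s * y i₀ := mul_nonneg hs0.le (hy0 i₀).le
        have : (1 : ℝ) / (2 * ((n : ℝ) + 1)) = 1 / 2 * (1 / ((n : ℝ) + 1)) := by
          rw [div_mul_div_comm]; norm_num
        linarith
      have hCC : s ^ (n - 1) * ∏ l ∈ Finset.univ.erase i₀, y l
          ≤ ∏ l ∈ Finset.univ.erase i₀, ((1 - s) • p + s • y) l := by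
        have := Finset.prod_le_prod (s := Finset.univ.erase i₀)
          (f := fun i => s * y i) (g := fun i => ((1 - s) • p + s • y) i)
          (fun i _ => mul_nonneg hs0.le (hy0 i).le) (fun i _ => hzge s hs i)
        calc s ^ (n - 1) * ∏ l ∈ Finset.univ.erase i₀, y l
            = ∏ l ∈ Finset.univ.erase i₀, (s * y l) := by
              rw [Finset.prod_mul_distrib, Finset.prod_const,
                Finset.card_erase_of_mem (mem_univ i₀), card_univ, Fintype.card_fin]
          _ ≤ _ := this
      have hprodz : ∏ i, ((1 - s) • p + s • y) i
          = ((1 - s) • p + s • y) i₀ * ∏ l ∈ Finset.univ.erase i₀, ((1 - s) • p + s • y) l :=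
        (Finset.mul_prod_erase _ _ (mem_univ i₀)).symm
      have hzge' : ∀ l, (0:ℝ) ≤ ((1 - s) • p + s • y) l :=
        fun l => le_trans (mul_nonneg hs0.le (hy0 l).le) (hzge s hs l)
      have hspow : s * s ^ (n - 1) = s ^ n := by
        rw [← pow_succ']
        congr 1
        omega
      calc (1 / (2 * ((n : ℝ) + 1))) * ((1 - ∑ i, y i) * ∏ l ∈ Finset.univ.erase i₀, y l) * s ^ n
          = (s * (1 - ∑ i, y i)) * ((1 / (2 * ((n : ℝ) + 1)))
              * (s ^ (n - 1) * ∏ l ∈ Finset.univ.erase i₀, y l)) := by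
            rw [← hspow]; ring
        _ ≤ (1 - ∑ i, ((1 - s) • p + s • y) i) * (((1 - s) • p + s • y) i₀
              * ∏ l ∈ Finset.univ.erase i₀, ((1 - s) • p + s • y) l) := by
            have hpos : (0:ℝ) < 1 / (2 * ((n : ℝ) + 1)) := by positivity
            have hyprod : (0:ℝ) ≤ ∏ l ∈ Finset.univ.erase i₀, y l :=
              Finset.prod_nonneg fun l _ => (hy0 l).le
            have hin : 1 / (2 * ((n : ℝ) + 1)) * (s ^ (n - 1) * ∏ l ∈ Finset.univ.erase i₀, y l)
                ≤ ((1 - s) • p + s • y) i₀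
                  * ∏ l ∈ Finset.univ.erase i₀, ((1 - s) • p + s • y) l := by
              apply mul_le_mul hB hCC (by positivity) (by linarith [hB])
            apply mul_le_mul hA hin (by positivity)
            have h0y : (0:ℝ) ≤ s * (1 - ∑ i, y i) :=
              mul_nonneg hs0.le (by linarith)
            linarith [hA]
        _ = gfn ((1 - s) • p + s • y) := by rw [gfn, hprodz]
  obtain ⟨c, hcpos, hcb⟩ := hlow
  -- eventual upper bound on the slope
  have hev : ∀ᶠ s in nhdsWithin (0:ℝ) (Set.Ioi 0),
      (v ((1 - s) • p + s • y) - v p) / s ≤ -(c ^ α * s ^ ((n : ℝ) * α - 1)) := by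
    filter_upwards [Ioc_mem_nhdsGT_of_mem (show (0:ℝ) ∈ Set.Ico 0 (1/2) from
      ⟨le_refl 0, by norm_num⟩)] with s hs
    have hs0 : (0:ℝ) < s := hs.1
    have hb := hcb s hs
    rw [hvp, hv, sub_zero]
    have h1 : (c * s ^ n) ^ α ≤ gfn ((1 - s) • p + s • y) ^ α :=
      Real.rpow_le_rpow (by positivity) hb hα0.le
    have h2 : (c * s ^ n) ^ α = c ^ α * s ^ ((n : ℝ) * α) := by
      rw [Real.mul_rpow hcpos.le (by positivity), ← Real.rpow_natCast s n,
        ← Real.rpow_mul hs0.le]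
    have h3 : c ^ α * s ^ ((n : ℝ) * α - 1) = (c ^ α * s ^ ((n : ℝ) * α)) / s := by
      rw [Real.rpow_sub hs0, Real.rpow_one]; ring
    rw [h3, ← neg_div, div_le_div_iff_of_pos_right hs0]
    rw [h2] at h1
    linarith
  refine tendsto_atBot_mono' _ hev ?_
  have he : (n : ℝ) * α - 1 < 0 := by linarith
  have h1 : Tendsto (fun s : ℝ => s ^ ((n : ℝ) * α - 1)) (nhdsWithin 0 (Set.Ioi 0)) atTop := by
    have h2 : Tendsto (fun s : ℝ => (s⁻¹) ^ (-((n : ℝ) * α - 1)))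
        (nhdsWithin 0 (Set.Ioi 0)) atTop :=
      (tendsto_rpow_atTop (by linarith)).comp tendsto_inv_nhdsGT_zero
    refine h2.congr' ?_
    filter_upwards [self_mem_nhdsWithin] with s hs
    have hs0 : (0:ℝ) < s := hs
    rw [Real.rpow_neg (inv_nonneg.mpr hs0.le), Real.inv_rpow hs0.le, inv_inv]
  have h4 : Tendsto (fun s : ℝ => c ^ α * s ^ ((n : ℝ) * α - 1))
      (nhdsWithin 0 (Set.Ioi 0)) atTop := h1.const_mul_atTop (by positivity)
  exact tendsto_neg_atBot_iff.mpr h4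

end Stmt10

/-- For `γ > n`, on the standard open simplex `Δ`, the function
`v(x) = -(x₀x₁⋯xₙ)^(2/(n+γ))` satisfies `C₁(-v)^(-γ) ≤ det D²v ≤ C₂(-v)^(-γ)` in `Δ`
for constants `C₁, C₂ > 0` depending only on `n, γ`, and `v` has infinite slope at
every boundary point of `Δ`. -/
theorem stmt_10 (n : ℕ) (hn : 1 ≤ n) (γ : ℝ) (hγ : (n : ℝ) < γ)
    (v : EuclideanSpace ℝ (Fin n) → ℝ)
    (hv : ∀ x : EuclideanSpace ℝ (Fin n),
      v x = -(((1 - ∑ i, x i) * ∏ i, x i) ^ (2 / ((n : ℝ) + γ)))) :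
    (∃ C₁ > (0 : ℝ), ∃ C₂ > (0 : ℝ),
      ∀ x ∈ {y : EuclideanSpace ℝ (Fin n) | (∀ i, 0 < y i) ∧ ∑ i, y i < 1},
        C₁ * (-v x) ^ (-γ) ≤ hessDet v x ∧ hessDet v x ≤ C₂ * (-v x) ^ (-γ)) ∧
    (∀ p ∈ frontier {y : EuclideanSpace ℝ (Fin n) | (∀ i, 0 < y i) ∧ ∑ i, y i < 1},
      ∀ y ∈ {y : EuclideanSpace ℝ (Fin n) | (∀ i, 0 < y i) ∧ ∑ i, y i < 1},
        Filter.Tendsto (fun s : ℝ => (v ((1 - s) • p + s • y) - v p) / s)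
          (nhdsWithin 0 (Set.Ioi 0)) Filter.atBot) := by
  have hnR : (1 : ℝ) ≤ (n : ℝ) := by exact_mod_cast hn
  have hns : (0 : ℝ) < (n : ℝ) + γ := by linarith
  set α : ℝ := 2 / ((n : ℝ) + γ) with hαdef
  have hα0 : 0 < α := by rw [hαdef]; positivity
  have hαn : (n : ℝ) * α < 1 := by
    have h1 : (n : ℝ) * (2 / ((n : ℝ) + γ)) = ((n : ℝ) * 2) / ((n : ℝ) + γ) := by ring
    rw [hαdef, h1, div_lt_one hns]
    linarith
  have hv' : ∀ z, v z = -(Stmt10.gfn z ^ α) := by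
    intro z
    rw [hv z, hαdef, Stmt10.gfn]
  haveI : Nonempty (Fin n) := ⟨⟨0, hn⟩⟩
  constructor
  · refine ⟨α ^ n * min α (1 - (n : ℝ) * α),
      mul_pos (pow_pos hα0 n) (lt_min hα0 (by linarith)),
      α ^ n * max α (1 - (n : ℝ) * α),
      mul_pos (pow_pos hα0 n) (lt_max_iff.mpr (Or.inl hα0)), ?_⟩
    intro x hx
    obtain ⟨hx0, hx1⟩ := hx
    have hg := Stmt10.gfn_pos x hx0 hx1
    have hdet : hessDet v x = α ^ n
        * (α + (1 - ((n : ℝ) + 1) * α) * ((1 - ∑ i, x i) ^ 2 + ∑ i, (x i) ^ 2))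
        * Stmt10.gfn x ^ (-(α * γ)) := by
      rw [hessDet]
      have hM : (Matrix.of fun i j => iteratedFDeriv ℝ 2 v x
            ![EuclideanSpace.single i 1, EuclideanSpace.single j 1])
          = (Matrix.of fun i j : Fin n => Stmt10.Hent α i j x) := by
        ext i j
        simp only [Matrix.of_apply]
        exact Stmt10.hess_entry α v hv' x hx0 hx1 i j
      rw [hM, Stmt10.det_formula hn hαdef hγ x hx0 hx1]
    have hneg : -v x = Stmt10.gfn x ^ α := by rw [hv' x]; ring
    have hrp : (-v x) ^ (-γ) = Stmt10.gfn x ^ (-(α * γ)) := by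
      rw [hneg, ← Real.rpow_mul hg.le]
      congr 1
      ring
    set σ : ℝ := (1 - ∑ i, x i) ^ 2 + ∑ i, (x i) ^ 2 with hσdef
    have hσ0 : 0 < σ := by
      have h1 : 0 < (1 - ∑ i, x i) ^ 2 := by
        have : 0 < 1 - ∑ i, x i := by linarith
        positivity
      have h2 : 0 ≤ ∑ i, (x i) ^ 2 := Finset.sum_nonneg fun i _ => sq_nonneg _
      rw [hσdef]; linarith
    have hσ1 : σ < 1 := by
      have hxlt1 : ∀ i, x i < 1 := fun i =>
        lt_of_le_of_lt (Finset.single_le_sum (f := fun i => x i)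
          (fun j _ => (hx0 j).le) (mem_univ i)) hx1
      have h1 : ∑ i, (x i) ^ 2 ≤ ∑ i, x i :=
        Finset.sum_le_sum fun i _ => by nlinarith [hx0 i, hxlt1 i]
      have hspos : 0 < ∑ i, x i := Finset.sum_pos (fun i _ => hx0 i) Finset.univ_nonempty
      have h2 : (1 - ∑ i, x i) ^ 2 < 1 - ∑ i, x i := by nlinarith
      rw [hσdef]; linarith
    have hΦid : α + (1 - ((n : ℝ) + 1) * α) * σ = α * (1 - σ) + (1 - (n : ℝ) * α) * σ := by
      ring
    have hlb : min α (1 - (n : ℝ) * α) ≤ α + (1 - ((n : ℝ) + 1) * α) * σ := by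
      rw [hΦid]
      have h1 : min α (1 - (n : ℝ) * α) * (1 - σ) ≤ α * (1 - σ) :=
        mul_le_mul_of_nonneg_right (min_le_left _ _) (by linarith)
      have h2 : min α (1 - (n : ℝ) * α) * σ ≤ (1 - (n : ℝ) * α) * σ :=
        mul_le_mul_of_nonneg_right (min_le_right _ _) hσ0.le
      have h3 : min α (1 - (n : ℝ) * α)
          = min α (1 - (n : ℝ) * α) * (1 - σ) + min α (1 - (n : ℝ) * α) * σ := by ring
      linarith
    have hub : α + (1 - ((n : ℝ) + 1) * α) * σ ≤ max α (1 - (n : ℝ) * α) := by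
      rw [hΦid]
      have h1 : α * (1 - σ) ≤ max α (1 - (n : ℝ) * α) * (1 - σ) :=
        mul_le_mul_of_nonneg_right (le_max_left _ _) (by linarith)
      have h2 : (1 - (n : ℝ) * α) * σ ≤ max α (1 - (n : ℝ) * α) * σ :=
        mul_le_mul_of_nonneg_right (le_max_right _ _) hσ0.le
      have h3 : max α (1 - (n : ℝ) * α)
          = max α (1 - (n : ℝ) * α) * (1 - σ) + max α (1 - (n : ℝ) * α) * σ := by ring
      linarith
    have hrpos : 0 < Stmt10.gfn x ^ (-(α * γ)) := Real.rpow_pos_of_pos hg _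
    rw [hdet, hrp]
    constructor
    · exact mul_le_mul_of_nonneg_right
        (mul_le_mul_of_nonneg_left hlb (pow_pos hα0 n).le) hrpos.le
    · exact mul_le_mul_of_nonneg_right
        (mul_le_mul_of_nonneg_left hub (pow_pos hα0 n).le) hrpos.le
  · intro p hp y hy
    exact Stmt10.slope_infinite hn hα0 hαn v hv' p hp y hy.1 hy.2
end

section
/- Let Ω ⊂ ℝⁿ be a bounded convex domain, φ : ∂Ω → ℝ ∪ {+∞} lower semicontinuous, bounded below, not identically +∞, and restricting to a convex function on every line segment in ∂Ω. If u : Ω → ℝ is a strictly convex function with boundary value u|∂Ω ≤ φ, then u(x) < env(φ)(x) for every x ∈ Ω, where env(φ) is the convex envelope of φ. -/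
open Filter

open Set

/-- Supporting affine functional for a convex function at an interior point. -/
lemma exists_support {E : Type*} [NormedAddCommGroup E] [NormedSpace ℝ E]
    {Ω : Set E} (hΩo : IsOpen Ω) {u : E → ℝ} (hu : ConvexOn ℝ Ω u)
    (hcont : ContinuousOn u Ω) {x : E} (hx : x ∈ Ω) :
    ∃ L : E →L[ℝ] ℝ, ∀ y ∈ Ω, u x + (L y - L x) ≤ u y := by
  set S : Set (E × ℝ) := {q : E × ℝ | q.1 ∈ Ω ∧ u q.1 < q.2} with hS
  have hSopen : IsOpen S := by
    rw [isOpen_iff_mem_nhds]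
    rintro ⟨y, t⟩ ⟨hy, hlt⟩
    have hcy : ContinuousAt u y := hcont.continuousAt (hΩo.mem_nhds hy)
    have h1 : {q : E × ℝ | q.1 ∈ Ω} ∈ nhds (y, t) :=
      (hΩo.preimage continuous_fst).mem_nhds hy
    have h2 : ContinuousAt (fun q : E × ℝ => q.2 - u q.1) (y, t) :=
      continuousAt_snd.sub (hcy.comp continuousAt_fst)
    have h3 : ∀ᶠ q : E × ℝ in nhds (y, t), 0 < q.2 - u q.1 :=
      h2.eventually (eventually_gt_nhds (sub_pos.2 hlt))
    filter_upwards [h1, h3] with q hq1 hq3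
    exact ⟨hq1, by linarith⟩
  have hSconv : Convex ℝ S := by
    rintro ⟨y1, t1⟩ ⟨hy1, ht1⟩ ⟨y2, t2⟩ ⟨hy2, ht2⟩ a b ha hb hab
    refine ⟨hu.1 hy1 hy2 ha hb hab, ?_⟩
    have hcv := hu.2 hy1 hy2 ha hb hab
    show u (a • y1 + b • y2) < a • t1 + b • t2
    rcases ha.eq_or_lt with rfl | ha'
    · have hb1 : b = 1 := by linarith
      subst hb1
      simpa using ht2
    · have h1 : a * u y1 < a * t1 := mul_lt_mul_of_pos_left ht1 ha'
      have h2 : b * u y2 ≤ b * t2 := mul_le_mul_of_nonneg_left ht2.le hb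
      have : u (a • y1 + b • y2) ≤ a * u y1 + b * u y2 := by
        simpa [smul_eq_mul] using hcv
      simp only [smul_eq_mul]
      linarith
  have hxS : (x, u x) ∉ S := fun h => lt_irrefl _ h.2
  obtain ⟨f, hf⟩ := geometric_hahn_banach_open_point hSconv hSopen hxS
  set β : ℝ := f (0, 1) with hβdef
  set g : E → ℝ := fun y => f (y, 0) with hgdef
  have hsplit : ∀ (y : E) (t : ℝ), f (y, t) = g y + t * β := by
    intro y t
    have : (y, t) = (y, (0 : ℝ)) + t • ((0 : E), (1 : ℝ)) := by
      simp [Prod.ext_iff]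
    rw [this, map_add, map_smul]
    simp [hgdef, hβdef, smul_eq_mul]
  have hβneg : β < 0 := by
    have h := hf (x, u x + 1) ⟨hx, show u x < u x + 1 by linarith⟩
    rw [hsplit, hsplit] at h
    linarith
  have hne0 : β ≠ 0 := ne_of_lt hβneg
  have hne' : -β ≠ 0 := by simpa using neg_ne_zero.2 hne0
  have key : ∀ y ∈ Ω, g y + u y * β ≤ g x + u x * β := by
    intro y hy
    by_contra h
    push_neg at h
    set A : ℝ := g y + u y * β - (g x + u x * β) with hA
    have hApos : 0 < A := by simp only [hA]; linarith
    have hδ : 0 < A / (-β) := div_pos hApos (by linarith)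
    have h5 := hf (y, u y + A / (-β))
      ⟨hy, show u y < u y + A / (-β) by linarith⟩
    rw [hsplit, hsplit] at h5
    have h6 : (u y + A / (-β)) * β = u y * β - A := by
      field_simp
      ring
    rw [h6] at h5
    simp only [hA] at h5
    linarith
  refine ⟨(-β)⁻¹ • (f.comp (ContinuousLinearMap.inl ℝ E ℝ)), fun y hy => ?_⟩
  have hky := key y hy
  have hinv : 0 < (-β)⁻¹ := inv_pos.2 (by linarith)
  simp only [ContinuousLinearMap.smul_apply, ContinuousLinearMap.comp_apply,
    ContinuousLinearMap.inl_apply, smul_eq_mul]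
  have hfg : ∀ z : E, f (z, 0) = g z := fun z => rfl
  rw [hfg, hfg]
  have h4 : (-β)⁻¹ * β = -1 := by
    rw [inv_neg, neg_mul, inv_mul_cancel₀ hne0]
  have h2 := mul_le_mul_of_nonneg_left hky hinv.le
  have e1 : (-β)⁻¹ * (g y + u y * β) = (-β)⁻¹ * g y + u y * ((-β)⁻¹ * β) := by ring
  have e2 : (-β)⁻¹ * (g x + u x * β) = (-β)⁻¹ * g x + u x * ((-β)⁻¹ * β) := by ring
  rw [e1, e2, h4] at h2
  linarith

/-- The convex envelope (with values in `EReal`) of `φ : ∂Ω → ℝ ∪ {+∞}` at `x`: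
the supremum of `a(x)` over affine functions `a` with `a ≤ φ` on `∂Ω`. -/
noncomputable def convEnvE {n : ℕ} (Ω : Set (EuclideanSpace ℝ (Fin n)))
    (φ : EuclideanSpace ℝ (Fin n) → EReal) (x : EuclideanSpace ℝ (Fin n)) : EReal :=
  sSup {y : EReal | ∃ (L : EuclideanSpace ℝ (Fin n) →L[ℝ] ℝ) (c : ℝ),
    (∀ p ∈ frontier Ω, ((L p + c : ℝ) : EReal) ≤ φ p) ∧ y = ((L x + c : ℝ) : EReal)}

set_option maxHeartbeats 1000000 in
/-- Let `φ : ∂Ω → ℝ ∪ {+∞}` be lower semicontinuous, bounded below, not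
identically `+∞`, and convex on segments of `∂Ω`. If `u` is strictly convex on `Ω` with
boundary values `≤ φ`, then `u < env(φ)` throughout `Ω`. -/
theorem stmt_15 (n : ℕ) (hn : 1 ≤ n) (Ω : Set (EuclideanSpace ℝ (Fin n)))
    (hΩo : IsOpen Ω) (hΩc : Convex ℝ Ω) (hΩb : Bornology.IsBounded Ω)
    (hΩne : Ω.Nonempty)
    (φ : EuclideanSpace ℝ (Fin n) → EReal)
    (hφlsc : LowerSemicontinuousOn φ (frontier Ω))
    (hφbdd : ∃ m : ℝ, ∀ p ∈ frontier Ω, (m : EReal) ≤ φ p)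
    (hφne : ∃ p ∈ frontier Ω, φ p ≠ ⊤)
    (hφconv : ∀ p ∈ frontier Ω, ∀ q ∈ frontier Ω, segment ℝ p q ⊆ frontier Ω →
      ∀ t ∈ Set.Icc (0 : ℝ) 1,
        φ ((1 - t) • p + t • q) ≤ ((1 - t : ℝ) : EReal) * φ p + ((t : ℝ) : EReal) * φ q)
    (u : EuclideanSpace ℝ (Fin n) → ℝ)
    (hu : StrictConvexOn ℝ Ω u)
    (hbv : ∀ p ∈ frontier Ω, ∀ x ∈ Ω,
      Filter.liminf (fun s : ℝ => ((u ((1 - s) • p + s • x) : ℝ) : EReal))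
        (nhdsWithin 0 (Set.Ioi 0)) ≤ φ p) :
    ∀ x ∈ Ω, ((u x : ℝ) : EReal) < convEnvE Ω φ x := by
  intro x hx
  haveI : Nonempty (Fin n) := ⟨⟨0, hn⟩⟩
  have hcont : ContinuousOn u Ω := hu.convexOn.continuousOn hΩo
  obtain ⟨L, hL⟩ := exists_support hΩo hu.convexOn hcont hx
  set c : ℝ := u x - L x with hc
  have hax : L x + c = u x := by simp [hc]
  have ha_le : ∀ y ∈ Ω, L y + c ≤ u y := by
    intro y hy
    have := hL y hy
    simp only [hc]
    linarith
  -- strict inequality off x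
  have ha_lt : ∀ y ∈ Ω, y ≠ x → L y + c < u y := by
    intro y hy hne
    rcases lt_or_ge (L y + c) (u y) with h | h
    · exact h
    have heq : u y = L y + c := le_antisymm h (ha_le y hy)
    have hm : (1/2 : ℝ) • x + (1/2 : ℝ) • y ∈ Ω :=
      hΩc hx hy (by norm_num) (by norm_num) (by norm_num)
    have hsc := hu.2 hx hy (Ne.symm hne) (by norm_num : (0:ℝ) < 1/2)
      (by norm_num : (0:ℝ) < 1/2) (by norm_num)
    have hlin : L ((1/2 : ℝ) • x + (1/2 : ℝ) • y) = (1/2) * L x + (1/2) * L y := by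
      rw [map_add, map_smul, map_smul]; simp [smul_eq_mul]
    have hle := ha_le _ hm
    simp only [smul_eq_mul] at hsc
    rw [hlin] at hle
    linarith
  -- frontier is nonempty and compact
  have hfr_ne : (frontier Ω).Nonempty := by
    rw [nonempty_frontier_iff]
    exact ⟨hΩne, fun h => NormedSpace.unbounded_univ ℝ _ (h ▸ hΩb)⟩
  have hfr_cpt : IsCompact (frontier Ω) :=
    Metric.isCompact_of_isClosed_isBounded isClosed_frontier
      (hΩb.closure.subset frontier_subset_closure)
  -- the compact set K halfway in
  set T : EuclideanSpace ℝ (Fin n) → EuclideanSpace ℝ (Fin n) :=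
    fun p => (1/2 : ℝ) • p + (1/2 : ℝ) • x with hT
  have hTcont : Continuous T := by
    exact (show Continuous (fun p : EuclideanSpace ℝ (Fin n) => (1/2 : ℝ) • p + (1/2 : ℝ) • x) by fun_prop)
  set K : Set (EuclideanSpace ℝ (Fin n)) := T '' frontier Ω with hK
  have hKcpt : IsCompact K := hfr_cpt.image hTcont
  have hKne : K.Nonempty := hfr_ne.image T
  have hKΩ : K ⊆ Ω := by
    rintro _ ⟨p, hp, rfl⟩
    have h1 : (1/2 : ℝ) • x + (1/2 : ℝ) • p ∈ interior Ω :=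
      hΩc.combo_interior_closure_mem_interior (by rwa [hΩo.interior_eq])
        (frontier_subset_closure hp) (by norm_num) (by norm_num) (by norm_num)
    rw [hΩo.interior_eq] at h1
    simpa [hT, add_comm] using h1
  -- minimum of u - a on K
  obtain ⟨z0, hz0K, hz0min⟩ := hKcpt.exists_isMinOn hKne
    (((hcont.mono hKΩ).sub ((L.continuous.continuousOn).add continuousOn_const)))
  set ε : ℝ := u z0 - (L z0 + c) with hε
  have hz0Ω : z0 ∈ Ω := hKΩ hz0K
  have hz0x : z0 ≠ x := by
    intro hzx
    obtain ⟨p, hp, hpe⟩ := hz0K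
    simp only [hT] at hpe
    have hpe' : (1/2 : ℝ) • p + (1/2 : ℝ) • x = (1/2 : ℝ) • x + (1/2 : ℝ) • x := by
      rw [hpe, hzx]
      module
    have h2 : (1/2 : ℝ) • p = (1/2 : ℝ) • x := add_right_cancel hpe'
    have hpx : p = x := smul_right_injective _ (by norm_num : (1/2 : ℝ) ≠ 0) h2
    rw [hpx, hΩo.frontier_eq] at hp
    exact hp.2 hx
  have hεpos : 0 < ε := by
    have := ha_lt z0 hz0Ω hz0x
    simp only [hε]
    linarith
  have hεmin : ∀ z ∈ K, ε ≤ u z - (L z + c) := by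
    intro z hz
    have := hz0min hz
    simpa [hε] using this
  -- key estimate along segments
  have hseg : ∀ p ∈ frontier Ω, ∀ s ∈ Set.Ioc (0:ℝ) (1/2),
      (1 - s) • p + s • x ∈ Ω ∧ L ((1 - s) • p + s • x) + c + ε ≤ u ((1 - s) • p + s • x) := by
    intro p hp s hs
    obtain ⟨hs0, hs2⟩ := hs
    have hs1 : s < 1 := lt_of_le_of_lt hs2 (by norm_num)
    set w : EuclideanSpace ℝ (Fin n) := (1 - s) • p + s • x with hw
    have hwΩ : w ∈ Ω := by
      have h1 : s • x + (1 - s) • p ∈ interior Ω :=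
        hΩc.combo_interior_closure_mem_interior (by rwa [hΩo.interior_eq])
          (frontier_subset_closure hp) hs0 (by linarith) (by ring)
      rw [hΩo.interior_eq] at h1
      simpa [hw, add_comm] using h1
    refine ⟨hwΩ, ?_⟩
    set lam : ℝ := 1 / (2 * (1 - s)) with hlam
    have h1s : (0:ℝ) < 1 - s := by linarith
    have hlam_pos : 0 < lam := by positivity
    have hlam_le : lam ≤ 1 := by
      rw [hlam, div_le_one (by linarith)]
      linarith
    have hid : T p = lam • w + (1 - lam) • x := by
      rw [hT, hw]
      match_scalars
      · simp only [hlam]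
        field_simp
      · simp only [hlam]
        field_simp
        ring
    have hcv := hu.convexOn.2 hwΩ hx hlam_pos.le (by linarith : (0:ℝ) ≤ 1 - lam)
      (by ring : lam + (1 - lam) = 1)
    rw [← hid] at hcv
    simp only [smul_eq_mul] at hcv
    have hlinT : L (T p) + c = lam * (L w + c) + (1 - lam) * (L x + c) := by
      rw [hid, map_add, map_smul, map_smul]
      simp only [smul_eq_mul]
      ring
    have hTK : T p ∈ K := ⟨p, hp, rfl⟩
    have hεT := hεmin _ hTK
    have hd0 : 0 ≤ u w - (L w + c) := by linarith [ha_le w hwΩ]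
    have hmul : lam * (u w - (L w + c)) ≤ u w - (L w + c) :=
      mul_le_of_le_one_left hd0 hlam_le
    -- ε ≤ u (T p) - (L (T p) + c) ≤ lam * (u w - (L w + c)) ≤ u w - (L w + c)
    nlinarith [hεT, hcv, hlinT, hax]
  -- liminf estimate gives affine minorant of φ
  have hφge : ∀ p ∈ frontier Ω, ((L p + c + ε/2 : ℝ) : EReal) ≤ φ p := by
    intro p hp
    have hta : Tendsto (fun s : ℝ => L ((1 - s) • p + s • x) + c) (nhdsWithin 0 (Set.Ioi 0))
        (nhds (L p + c)) := by
      have hcts : Continuous (fun s : ℝ => L ((1 - s) • p + s • x) + c) := by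
        apply Continuous.add _ continuous_const
        exact L.continuous.comp (((continuous_const.sub continuous_id).smul
          continuous_const).add (continuous_id.smul continuous_const))
      have h0 : Tendsto (fun s : ℝ => L ((1 - s) • p + s • x) + c) (nhds 0)
          (nhds (L p + c)) := by
        have := hcts.tendsto 0
        simpa using this
      exact h0.mono_left nhdsWithin_le_nhds
    have hev1 : ∀ᶠ s : ℝ in nhdsWithin 0 (Set.Ioi 0),
        L p + c - ε/2 < L ((1 - s) • p + s • x) + c :=
      hta.eventually (eventually_gt_nhds (by linarith))
    have hev2 : Set.Ioc (0:ℝ) (1/2) ∈ nhdsWithin 0 (Set.Ioi 0) :=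
      Ioc_mem_nhdsGT (by norm_num)
    have hev : ∀ᶠ s : ℝ in nhdsWithin 0 (Set.Ioi 0),
        ((L p + c + ε/2 : ℝ) : EReal) ≤ ((u ((1 - s) • p + s • x) : ℝ) : EReal) := by
      filter_upwards [hev1, hev2] with s h1 h2
      have h3 := (hseg p hp s h2).2
      exact EReal.coe_le_coe_iff.2 (by linarith)
    have hlim : ((L p + c + ε/2 : ℝ) : EReal) ≤ Filter.liminf (fun s : ℝ =>
        ((u ((1 - s) • p + s • x) : ℝ) : EReal)) (nhdsWithin 0 (Set.Ioi 0)) := by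
      apply Filter.le_liminf_of_le _ hev
      isBoundedDefault
    exact hlim.trans (hbv p hp x hx)
  have hsup : ((L x + (c + ε/2) : ℝ) : EReal) ≤ convEnvE Ω φ x := by
    apply le_sSup
    refine ⟨L, c + ε/2, fun p hp => ?_, rfl⟩
    rw [show L p + (c + ε/2) = L p + c + ε/2 from by ring]
    exact hφge p hp
  refine lt_of_lt_of_le ?_ hsup
  have : u x < L x + (c + ε/2) := by linarith
  exact_mod_cast this
end
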